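/- arXiv:2107.06123 — 4 statements merged into one kernel-verified Lean document; each statement's English description precedes it below -/
import Mathlib

section
/- For every d > 0 with d ≠ e, a point α ∈ [0,1] is a local maximiser of Φ_d on [0,1] if and only if α is a stable fixed point of φ_d (i.e. φ_d(α) = α and φ_d'(α) < 1). For d = e, the function φ_e has a unique fixed point ᾱ = 1 − 1/e, which is the unique local maximiser of Φ_e on [0,1] and is an inflection point of φ_e (φ_e'(ᾱ) = 1 and φ_e''(ᾱ) = 0). -/
open Filter Topology MeasureTheory ProbabilityTheory

noncomputable section

/-- `φ_d(α) = 1 − exp(−d·exp(−d(1−α)))`. -/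
def phiFn (d α : ℝ) : ℝ := 1 - Real.exp (-d * Real.exp (-d * (1 - α)))

/-- `Φ_d(α) = exp(−d·exp(−d(1−α))) + (1 + d(1−α))·exp(−d(1−α)) − 1`. -/
def PhiFn (d α : ℝ) : ℝ :=
  Real.exp (-d * Real.exp (-d * (1 - α))) + (1 + d * (1 - α)) * Real.exp (-d * (1 - α)) - 1

/-- `α_*(d)`: the smallest fixed point of `φ_d` in `[0,1]`. -/
def alphaMin (d : ℝ) : ℝ := sInf {α : ℝ | α ∈ Set.Icc (0:ℝ) 1 ∧ phiFn d α = α}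

/-- `α^*(d)`: the largest fixed point of `φ_d` in `[0,1]`. -/
def alphaMax (d : ℝ) : ℝ := sSup {α : ℝ | α ∈ Set.Icc (0:ℝ) 1 ∧ phiFn d α = α}

/-- `α_0(d)`: for `d ≤ e` equal to `α_*(d)`; for `d > e` the unique fixed point of `φ_d`
in the open interval `(α_*(d), α^*(d))`. -/
def alphaMid (d : ℝ) : ℝ :=
  if d ≤ Real.exp 1 then alphaMin d
  else sInf {α : ℝ | α ∈ Set.Ioo (alphaMin d) (alphaMax d) ∧ phiFn d α = α}

lemma expE_hasDeriv (d α : ℝ) :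
    HasDerivAt (fun x => Real.exp (-d * (1 - x))) (d * Real.exp (-d * (1 - α))) α := by
  have h : HasDerivAt (fun x : ℝ => -d * (1 - x)) d α := by
    simpa using ((hasDerivAt_const α (1:ℝ)).sub (hasDerivAt_id α)).const_mul (-d)
  simpa [mul_comm] using h.exp

lemma phi_hasDeriv (d α : ℝ) :
    HasDerivAt (phiFn d)
      (d^2 * Real.exp (-d*(1-α)) * Real.exp (-d * Real.exp (-d*(1-α)))) α := by
  have h1 : HasDerivAt (fun x => -d * Real.exp (-d * (1 - x)))
      (-d * (d * Real.exp (-d * (1 - α)))) α := (expE_hasDeriv d α).const_mul (-d)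
  have h2 := h1.exp
  have h3 := (hasDerivAt_const α (1:ℝ)).sub h2
  refine h3.congr_deriv ?_
  ring

lemma Phi_hasDeriv (d α : ℝ) :
    HasDerivAt (PhiFn d)
      (d^2 * Real.exp (-d*(1-α)) * (phiFn d α - α)) α := by
  have h1 : HasDerivAt (fun x => -d * Real.exp (-d * (1 - x)))
      (-d * (d * Real.exp (-d * (1 - α)))) α := (expE_hasDeriv d α).const_mul (-d)
  have h2 := h1.exp
  have h3 : HasDerivAt (fun x : ℝ => 1 + d * (1 - x)) (-d) α := by
    simpa using (((hasDerivAt_const α (1:ℝ)).sub (hasDerivAt_id α)).const_mul d).const_add 1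
  have h4 := (h3.mul (expE_hasDeriv d α))
  have h5 := ((h2.add h4).sub_const 1)
  refine h5.congr_deriv ?_
  unfold phiFn
  ring

lemma phi_diff (d : ℝ) : Differentiable ℝ (phiFn d) := fun x => (phi_hasDeriv d x).differentiableAt
lemma Phi_diff (d : ℝ) : Differentiable ℝ (PhiFn d) := fun x => (Phi_hasDeriv d x).differentiableAt

lemma deriv_Phi (d α : ℝ) :
    deriv (PhiFn d) α = d^2 * Real.exp (-d*(1-α)) * (phiFn d α - α) := (Phi_hasDeriv d α).deriv

lemma deriv_phi (d α : ℝ) :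
    deriv (phiFn d) α
      = d^2 * Real.exp (-d*(1-α)) * Real.exp (-d * Real.exp (-d*(1-α))) := (phi_hasDeriv d α).deriv

lemma localmax_of_signs {f : ℝ → ℝ} (hf : Differentiable ℝ f) {α δ : ℝ} (hδ : 0 < δ)
    (hleft : ∀ x ∈ Set.Ioo (α-δ) α, 0 ≤ deriv f x)
    (hright : ∀ x ∈ Set.Ioo α (α+δ), deriv f x ≤ 0) :
    IsLocalMaxOn f (Set.Icc (0:ℝ) 1) α := by
  have hmono : MonotoneOn f (Set.Icc (α-δ) α) := by
    apply monotoneOn_of_deriv_nonneg (convex_Icc _ _) hf.continuous.continuousOn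
      (fun x _ => (hf x).differentiableWithinAt)
    intro x hx
    rw [interior_Icc] at hx
    exact hleft x hx
  have hanti : AntitoneOn f (Set.Icc α (α+δ)) := by
    apply antitoneOn_of_deriv_nonpos (convex_Icc _ _) hf.continuous.continuousOn
      (fun x _ => (hf x).differentiableWithinAt)
    intro x hx
    rw [interior_Icc] at hx
    exact hright x hx
  have hb : Metric.ball α δ ∈ 𝓝[Set.Icc (0:ℝ) 1] α :=
    nhdsWithin_le_nhds (Metric.ball_mem_nhds α hδ)
  filter_upwards [hb] with x hx
  rw [Real.ball_eq_Ioo] at hx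
  rcases le_total x α with h | h
  · exact hmono ⟨hx.1.le, h⟩ ⟨by linarith, le_refl α⟩ h
  · exact hanti ⟨le_refl α, by linarith⟩ ⟨h, hx.2.le⟩ h

lemma not_localmax_of_pos_right {f : ℝ → ℝ} (hf : Differentiable ℝ f) {α δ : ℝ} (hδ : 0 < δ)
    (hα0 : 0 ≤ α) (hα1 : α < 1)
    (h : ∀ x ∈ Set.Ioo α (α+δ), 0 < deriv f x) :
    ¬ IsLocalMaxOn f (Set.Icc (0:ℝ) 1) α := by
  intro hmax
  set b := min 1 (α + δ) with hb
  have hab : α < b := lt_min hα1 (by linarith)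
  have hmono : StrictMonoOn f (Set.Icc α b) := by
    apply strictMonoOn_of_deriv_pos (convex_Icc _ _) hf.continuous.continuousOn
    intro x hx
    rw [interior_Icc] at hx
    exact h x ⟨hx.1, lt_of_lt_of_le hx.2 (min_le_right _ _)⟩
  obtain ⟨ε, hε, hball⟩ := Metric.mem_nhdsWithin_iff.mp hmax
  set x := min (α + ε/2) ((α + b)/2) with hx
  have hαx : α < x := lt_min (by linarith) (by linarith)
  have hxb : x ≤ b := le_trans (min_le_right _ _) (by linarith [min_le_left 1 (α+δ)])
  have hx1 : f x ≤ f α := by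
    apply hball
    refine ⟨?_, ?_⟩
    · rw [Metric.mem_ball, Real.dist_eq, abs_lt]
      have h1 : x ≤ α + ε/2 := min_le_left _ _
      constructor <;> linarith
    · exact ⟨by linarith, le_trans hxb (min_le_left _ _)⟩
  have := hmono ⟨le_refl α, hab.le⟩ ⟨hαx.le, hxb⟩ hαx
  linarith

lemma not_localmax_of_neg_left {f : ℝ → ℝ} (hf : Differentiable ℝ f) {α δ : ℝ} (hδ : 0 < δ)
    (hα0 : 0 < α) (hα1 : α ≤ 1)
    (h : ∀ x ∈ Set.Ioo (α-δ) α, deriv f x < 0) :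
    ¬ IsLocalMaxOn f (Set.Icc (0:ℝ) 1) α := by
  intro hmax
  set b := max 0 (α - δ) with hb
  have hab : b < α := max_lt hα0 (by linarith)
  have hanti : StrictAntiOn f (Set.Icc b α) := by
    apply strictAntiOn_of_deriv_neg (convex_Icc _ _) hf.continuous.continuousOn
    intro x hx
    rw [interior_Icc] at hx
    exact h x ⟨lt_of_le_of_lt (le_max_right 0 (α-δ)) hx.1, hx.2⟩
  obtain ⟨ε, hε, hball⟩ := Metric.mem_nhdsWithin_iff.mp hmax
  set x := max (α - ε/2) ((α + b)/2) with hx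
  have hαx : x < α := max_lt (by linarith) (by linarith)
  have hxb : b ≤ x := le_trans (by linarith [le_max_left 0 (α-δ)]) (le_max_right (α - ε/2) ((α+b)/2))
  have hx1 : f x ≤ f α := by
    apply hball
    refine ⟨?_, ?_⟩
    · rw [Metric.mem_ball, Real.dist_eq, abs_lt]
      constructor
      · have : α - ε/2 ≤ x := le_max_left _ _
        linarith
      · linarith
    · exact ⟨le_trans (le_max_left 0 (α-δ)) hxb, by linarith⟩
  have := hanti ⟨hxb, hαx.le⟩ ⟨hab.le, le_refl α⟩ hαx
  linarith

lemma phi_mem_Ioo {d : ℝ} (hd : 0 < d) (α : ℝ) : phiFn d α ∈ Set.Ioo (0:ℝ) 1 := by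
  unfold phiFn
  constructor
  · have h1 : -d * Real.exp (-d * (1 - α)) < 0 := by
      have := Real.exp_pos (-d * (1 - α)); nlinarith
    have := Real.exp_lt_one_iff.mpr h1  -- check name
    linarith
  · have := Real.exp_pos (-d * Real.exp (-d * (1 - α))); linarith

lemma fixed_interior {d α : ℝ} (hd : 0 < d) (hfix : phiFn d α = α) : α ∈ Set.Ioo (0:ℝ) 1 :=
  hfix ▸ phi_mem_Ioo hd α

lemma tangency {d α : ℝ} (hd : 0 < d) (hfix : phiFn d α = α)
    (h1 : d^2 * Real.exp (-d*(1-α)) * Real.exp (-d * Real.exp (-d*(1-α))) = 1) :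
    d = Real.exp 1 := by
  obtain ⟨hα0, hα1⟩ := fixed_interior hd hfix
  set u := 1 - α with hu
  have hu0 : 0 < u := by linarith
  have hu1 : u < 1 := by linarith
  set E := Real.exp (-d * u) with hE
  have hE0 : 0 < E := Real.exp_pos _
  -- fixed point: exp(-d*E) = u
  have hfix' : Real.exp (-d * E) = u := by
    unfold phiFn at hfix; rw [← hE] at hfix; linarith
  set L := -Real.log u with hL
  have hL0 : 0 < L := by
    have : Real.log u < 0 := Real.log_neg hu0 hu1
    linarith
  have hdE : d * E = L := by
    have := congrArg Real.log hfix'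
    rw [Real.log_exp] at this
    rw [hL, ← this]; ring
  -- h1 : d^2 * E * u = 1
  have h2 : d * L * u = 1 := by
    rw [← hdE]; rw [hfix'] at h1; nlinarith
  -- log E = -d*u
  have hlogE : Real.log E = -d * u := Real.log_exp _
  -- log(d*E) = log L : log d + log E = log L
  have hlogL : Real.log d + (-d * u) = Real.log L := by
    rw [← hlogE, ← Real.log_mul (ne_of_gt hd) (ne_of_gt hE0), hdE]
  -- log d = -log L + L  (from d = 1/(L*u), log u = -L)
  have hlogd : Real.log d = -Real.log L + L := by
    have hd' : d = (L * u)⁻¹ := by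
      field_simp
      nlinarith
    rw [hd', Real.log_inv, Real.log_mul (ne_of_gt hL0) (ne_of_gt hu0)]
    have : Real.log u = -L := by rw [hL]; ring
    rw [this]; ring
  have hdu : d * u = 1 / L := by
    have : d * L * u = 1 := h2
    field_simp
    nlinarith
  have key : L - 1/L = 2 * Real.log L := by
    have hneg : -d * u = -(1/L) := by rw [neg_mul, hdu]
    rw [hlogd, hneg] at hlogL
    linarith
  -- set s = log L, L = exp s, get sinh s = s
  set s := Real.log L with hs
  have hLs : L = Real.exp s := (Real.exp_log hL0).symm
  have hsinh : Real.sinh s = s := by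
    rw [hLs] at key
    rw [Real.sinh_eq, Real.exp_neg, inv_eq_one_div, key]
    ring
  have hs0 : s = 0 := by
    rcases lt_trichotomy s 0 with h | h | h
    · have : Real.sinh (-s) > -s := Real.self_lt_sinh_iff.mpr (by linarith)
      rw [Real.sinh_neg] at this; linarith
    · exact h
    · have := Real.self_lt_sinh_iff.mpr h; linarith
  have hL1 : L = 1 := by rw [hLs, hs0, Real.exp_zero]
  -- d * u = 1, d * E = 1, E = exp(-d*u) = exp(-1)
  have hdu1 : d * u = 1 := by rw [hdu, hL1]; norm_num
  have hE1 : E = Real.exp (-1) := by rw [hE, ← hdu1]; norm_num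
  have : d * Real.exp (-1) = 1 := by rw [← hE1, hdE, hL1]
  have he : Real.exp (-1) = (Real.exp 1)⁻¹ := Real.exp_neg 1
  rw [he] at this
  field_simp at this
  exact this

lemma G_cont (d : ℝ) : Continuous (fun x => phiFn d x - x) := by unfold phiFn; fun_prop

lemma fixed_of_localmax {d α : ℝ} (hd : 0 < d) (hα : α ∈ Set.Icc (0:ℝ) 1)
    (hmax : IsLocalMaxOn (PhiFn d) (Set.Icc (0:ℝ) 1) α) : phiFn d α = α := by
  by_contra hne
  rcases lt_or_gt_of_ne hne with hlt | hgt
  · -- G α < 0 : α > 0, decreasing to the left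
    have hα0 : 0 < α := lt_of_le_of_lt (phi_mem_Ioo hd α).1.le (by linarith [(phi_mem_Ioo hd α).1])
    have hS : (fun x => phiFn d x - x) ⁻¹' Set.Iio 0 ∈ 𝓝 α :=
      (G_cont d).continuousAt (Iio_mem_nhds (by linarith))
    obtain ⟨δ, hδ, hsub⟩ := Metric.mem_nhds_iff.mp hS
    refine not_localmax_of_neg_left (Phi_diff d) hδ hα0 hα.2 ?_ hmax
    intro x hx
    have hxball : x ∈ Metric.ball α δ := by
      rw [Metric.mem_ball, Real.dist_eq, abs_lt]; constructor <;> [linarith [hx.1]; linarith [hx.2]]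
    have hGx : phiFn d x - x < 0 := hsub hxball
    rw [deriv_Phi]
    have h1 : 0 < d^2 * Real.exp (-d*(1-x)) := by positivity
    nlinarith
  · -- G α > 0 : α < 1, increasing to the right
    have hα1 : α < 1 := lt_of_lt_of_le (by linarith [(phi_mem_Ioo hd α).2]) (le_refl 1) |>.trans_le (le_refl 1) |>.trans_le (le_refl 1)
    have hS : (fun x => phiFn d x - x) ⁻¹' Set.Ioi 0 ∈ 𝓝 α :=
      (G_cont d).continuousAt (Ioi_mem_nhds (by linarith))
    obtain ⟨δ, hδ, hsub⟩ := Metric.mem_nhds_iff.mp hS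
    refine not_localmax_of_pos_right (Phi_diff d) hδ hα.1 hα1 ?_ hmax
    intro x hx
    have hxball : x ∈ Metric.ball α δ := by
      rw [Metric.mem_ball, Real.dist_eq, abs_lt]; constructor <;> [linarith [hx.1]; linarith [hx.2]]
    have hGx : 0 < phiFn d x - x := hsub hxball
    rw [deriv_Phi]
    have h1 : 0 < d^2 * Real.exp (-d*(1-x)) := by positivity
    nlinarith

lemma deriv_G (d x : ℝ) :
    deriv (fun x => phiFn d x - x) x
      = d^2 * Real.exp (-d*(1-x)) * Real.exp (-d * Real.exp (-d*(1-x))) - 1 := by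
  exact ((phi_hasDeriv d x).sub (hasDerivAt_id x)).deriv

lemma P_cont (d : ℝ) :
    Continuous (fun x => d^2 * Real.exp (-d*(1-x)) * Real.exp (-d * Real.exp (-d*(1-x))) - 1) := by
  fun_prop

lemma part1 {d : ℝ} (hd : 0 < d) (hde : d ≠ Real.exp 1) {α : ℝ} (hα : α ∈ Set.Icc (0:ℝ) 1) :
    IsLocalMaxOn (PhiFn d) (Set.Icc (0:ℝ) 1) α ↔
      phiFn d α = α ∧ deriv (phiFn d) α < 1 := by
  constructor
  · intro hmax
    have hfix := fixed_of_localmax hd hα hmax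
    refine ⟨hfix, ?_⟩
    have hne1 : deriv (phiFn d) α ≠ 1 := fun h =>
      hde (tangency hd hfix (by rw [← deriv_phi]; exact h))
    rcases lt_or_gt_of_ne hne1 with h | h
    · exact h
    · exfalso
      obtain ⟨hα0, hα1⟩ := fixed_interior hd hfix
      have hPα : (0:ℝ) < d^2 * Real.exp (-d*(1-α)) * Real.exp (-d * Real.exp (-d*(1-α))) - 1 := by
        rw [← deriv_phi]; linarith
      have hS := (P_cont d).continuousAt (Ioi_mem_nhds hPα)
      obtain ⟨δ, hδ, hsub⟩ := Metric.mem_nhds_iff.mp hS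
      have hGmono : StrictMonoOn (fun x => phiFn d x - x) (Set.Icc α (α+δ/2)) := by
        apply strictMonoOn_of_deriv_pos (convex_Icc _ _) (G_cont d).continuousOn
        intro x hx
        rw [interior_Icc] at hx
        rw [deriv_G]
        apply hsub
        rw [Metric.mem_ball, Real.dist_eq, abs_lt]
        exact ⟨by linarith [hx.1], by linarith [hx.2]⟩
      refine not_localmax_of_pos_right (Phi_diff d) (by linarith : (0:ℝ) < δ/2) hα.1 hα1 ?_ hmax
      intro x hx
      have hGx : 0 < phiFn d x - x := by
        have := hGmono ⟨le_refl α, by linarith⟩ ⟨hx.1.le, hx.2.le⟩ hx.1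
        simpa [hfix] using this
      rw [deriv_Phi]
      have h1 : 0 < d^2 * Real.exp (-d*(1-x)) := by positivity
      nlinarith
  · rintro ⟨hfix, hlt⟩
    obtain ⟨hα0, hα1⟩ := fixed_interior hd hfix
    have hPα : d^2 * Real.exp (-d*(1-α)) * Real.exp (-d * Real.exp (-d*(1-α))) - 1 < 0 := by
      rw [← deriv_phi]; linarith
    have hS := (P_cont d).continuousAt (Iio_mem_nhds hPα)
    obtain ⟨δ, hδ, hsub⟩ := Metric.mem_nhds_iff.mp hS
    have hGanti : StrictAntiOn (fun x => phiFn d x - x) (Set.Icc (α-δ/2) (α+δ/2)) := by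
      apply strictAntiOn_of_deriv_neg (convex_Icc _ _) (G_cont d).continuousOn
      intro x hx
      rw [interior_Icc] at hx
      rw [deriv_G]
      apply hsub
      rw [Metric.mem_ball, Real.dist_eq, abs_lt]
      exact ⟨by linarith [hx.1], by linarith [hx.2]⟩
    apply localmax_of_signs (Phi_diff d) (by linarith : (0:ℝ) < δ/2)
    · intro x hx
      have hGx : 0 < phiFn d x - x := by
        have := hGanti ⟨hx.1.le, by linarith [hx.2]⟩ ⟨by linarith, by linarith⟩ hx.2
        simpa [hfix] using this
      rw [deriv_Phi]
      have h1 : 0 < d^2 * Real.exp (-d*(1-x)) := by positivity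
      nlinarith
    · intro x hx
      have hGx : phiFn d x - x < 0 := by
        have := hGanti ⟨by linarith, by linarith [hx.1]⟩ ⟨by linarith [hx.1], hx.2.le⟩ hx.1
        simpa [hfix] using this
      rw [deriv_Phi]
      have h1 : 0 < d^2 * Real.exp (-d*(1-x)) := by positivity
      nlinarith

section Ecase

local notation "e" => Real.exp 1

lemma he1 : (1:ℝ) < e := by
  have := Real.add_one_le_exp 1; linarith

/-- the auxiliary function F for d = e -/
def Faux (x : ℝ) : ℝ := e * Real.exp (-e * (1-x)) + Real.log (1-x)

lemma Faux_hasDeriv {x : ℝ} (hx : x < 1) :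
    HasDerivAt Faux (e^2 * Real.exp (-e * (1-x)) - 1/(1-x)) x := by
  have h1 := (expE_hasDeriv (Real.exp 1) x).const_mul (Real.exp 1)
  have h2 : HasDerivAt (fun y : ℝ => 1 - y) (-1) x := by
    exact ((hasDerivAt_const x (1:ℝ)).sub (hasDerivAt_id x)).congr_deriv (by ring)
  have h3 := h2.log (by linarith : (1:ℝ) - x ≠ 0)
  have h4 := h1.add h3
  refine h4.congr_deriv ?_
  rw [pow_two]
  ring

lemma log_lt_aux {u : ℝ} (hu : 0 < u) (hne : u ≠ (e)⁻¹) : Real.log u < e * u - 2 := by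
  have hmul : e * u ≠ 1 := by
    intro h
    apply hne
    field_simp
    linarith [h]
  have h := Real.log_lt_sub_one_of_pos (by positivity : 0 < e * u) hmul
  rw [Real.log_mul (Real.exp_ne_zero 1) (ne_of_gt hu), Real.log_exp] at h
  linarith

lemma Faux_deriv_neg {x : ℝ} (hx0 : 0 < x) (hx1 : x < 1) (hne : x ≠ 1 - 1/e) :
    e^2 * Real.exp (-e * (1-x)) - 1/(1-x) < 0 := by
  have hu0 : 0 < 1 - x := by linarith
  have hune : 1 - x ≠ (e)⁻¹ := by
    intro h
    apply hne
    rw [one_div]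
    linarith [h]
  have hlog := log_lt_aux hu0 hune
  have hpow : Real.exp 1 ^ 2 = Real.exp 2 := by
    rw [show (2:ℝ) = 1+1 by norm_num, Real.exp_add, pow_two]
  have h1 : e^2 * Real.exp (-e * (1-x)) = Real.exp (2 - e * (1-x)) := by
    rw [hpow, ← Real.exp_add]
    congr 1
    ring
  have h2 : 1/(1-x) = Real.exp (-Real.log (1-x)) := by
    rw [Real.exp_neg, Real.exp_log hu0, one_div]
  rw [h1, h2]
  have : 2 - e * (1-x) < -Real.log (1-x) := by linarith
  linarith [Real.exp_lt_exp.mpr this]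

lemma Faux_contOn : ContinuousOn Faux (Set.Iio (1:ℝ)) := by
  apply ContinuousOn.add
  · fun_prop
  · apply ContinuousOn.log
    · fun_prop
    · intro x hx
      simp only [Set.mem_Iio] at hx
      intro h; linarith [h]

lemma abar_mem : (1 - 1/e) ∈ Set.Ioo (0:ℝ) 1 := by
  have := he1
  constructor
  · have : 1/e < 1 := by rw [div_lt_one (by linarith)]; linarith
    linarith
  · have : 0 < 1/e := by positivity
    linarith

lemma Faux_abar : Faux (1 - 1/e) = 0 := by
  unfold Faux
  have h1 : (1:ℝ) - (1 - 1/e) = 1/e := by ring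
  rw [h1]
  have h2 : -e * (1/e) = -1 := by field_simp
  rw [h2, Real.exp_neg 1]
  rw [one_div, Real.log_inv, Real.log_exp]
  field_simp
  norm_num

lemma Faux_pos {x : ℝ} (hx0 : 0 < x) (hx1 : x < 1 - 1/e) : 0 < Faux x := by
  have hanti : StrictAntiOn Faux (Set.Icc x (1 - 1/e)) := by
    apply strictAntiOn_of_deriv_neg (convex_Icc _ _)
      (Faux_contOn.mono (fun y hy => lt_of_le_of_lt hy.2 abar_mem.2))
    intro y hy
    rw [interior_Icc] at hy
    rw [(Faux_hasDeriv (by linarith [hy.2, abar_mem.2] : y < 1)).deriv]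
    exact Faux_deriv_neg (by linarith [hy.1]) (by linarith [hy.2, abar_mem.2]) (by linarith [hy.2])
  have := hanti ⟨le_refl x, hx1.le⟩ ⟨hx1.le, le_refl _⟩ hx1
  rw [Faux_abar] at this
  exact this

lemma Faux_neg {x : ℝ} (hx0 : 1 - 1/e < x) (hx1 : x < 1) : Faux x < 0 := by
  have hanti : StrictAntiOn Faux (Set.Icc (1 - 1/e) x) := by
    apply strictAntiOn_of_deriv_neg (convex_Icc _ _)
      (Faux_contOn.mono (fun y hy => lt_of_le_of_lt hy.2 hx1))
    intro y hy
    rw [interior_Icc] at hy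
    rw [(Faux_hasDeriv (by linarith [hy.2] : y < 1)).deriv]
    exact Faux_deriv_neg (by linarith [hy.1, abar_mem.1]) (by linarith [hy.2]) (by linarith [hy.1])
  have := hanti ⟨le_refl _, hx0.le⟩ ⟨hx0.le, le_refl x⟩ hx0
  rw [Faux_abar] at this
  exact this

lemma G_of_Faux_pos {x : ℝ} (hx1 : x < 1) (hF : 0 < Faux x) : 0 < phiFn e x - x := by
  unfold Faux at hF
  have h1 : -e * Real.exp (-e * (1-x)) < Real.log (1-x) := by linarith
  have h2 := Real.exp_lt_exp.mpr h1
  rw [Real.exp_log (by linarith : (0:ℝ) < 1 - x)] at h2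
  unfold phiFn
  linarith

lemma G_of_Faux_neg {x : ℝ} (hx1 : x < 1) (hF : Faux x < 0) : phiFn e x - x < 0 := by
  unfold Faux at hF
  have h1 : Real.log (1-x) < -e * Real.exp (-e * (1-x)) := by linarith
  have h2 := Real.exp_lt_exp.mpr h1
  rw [Real.exp_log (by linarith : (0:ℝ) < 1 - x)] at h2
  unfold phiFn
  linarith

lemma Faux_of_fixed {x : ℝ} (hx1 : x < 1) (hfix : phiFn e x = x) : Faux x = 0 := by
  unfold phiFn at hfix
  have h1 : Real.exp (-e * Real.exp (-e * (1-x))) = 1 - x := by linarith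
  have h2 := congrArg Real.log h1
  rw [Real.log_exp] at h2
  unfold Faux
  linarith

lemma fixed_iff_e {α : ℝ} (hα : α ∈ Set.Icc (0:ℝ) 1) :
    phiFn e α = α ↔ α = 1 - 1/e := by
  constructor
  · intro hfix
    obtain ⟨h0, h1⟩ := fixed_interior (Real.exp_pos 1) hfix
    by_contra hne
    rcases lt_or_gt_of_ne hne with h | h
    · linarith [Faux_pos h0 h, Faux_of_fixed h1 hfix]
    · linarith [Faux_neg h h1, Faux_of_fixed h1 hfix]
  · rintro rfl
    unfold phiFn
    have h1 : (1:ℝ) - (1 - 1/e) = 1/e := by ring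
    rw [h1]
    have h2 : -e * (1/e) = -1 := by field_simp
    rw [h2, Real.exp_neg 1]
    have h3 : -e * (e)⁻¹ = -1 := by field_simp
    rw [h3, Real.exp_neg 1]
    rw [one_div]

end Ecase

section Ecase2
local notation "e" => Real.exp 1

lemma localmax_iff_e {α : ℝ} (hα : α ∈ Set.Icc (0:ℝ) 1) :
    IsLocalMaxOn (PhiFn e) (Set.Icc (0:ℝ) 1) α ↔ α = 1 - 1/e := by
  constructor
  · intro hmax
    exact (fixed_iff_e hα).mp (fixed_of_localmax (Real.exp_pos 1) hα hmax)
  · rintro rfl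
    obtain ⟨h0, h1⟩ := abar_mem
    have hδ : 0 < min (1 - 1/e) (1 - (1 - 1/e)) := lt_min h0 (by linarith)
    apply localmax_of_signs (Phi_diff _) hδ
    · intro x hx
      have hx0 : 0 < x := by
        have := min_le_left (1 - 1/e) (1 - (1 - 1/e)); linarith [hx.1]
      have hGx : 0 < phiFn e x - x :=
        G_of_Faux_pos (by linarith [hx.2]) (Faux_pos hx0 hx.2)
      rw [deriv_Phi]
      have hp : 0 < (e)^2 * Real.exp (-(e) * (1 - x)) := by positivity
      nlinarith
    · intro x hx
      have hx1 : x < 1 := by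
        have := min_le_right (1 - 1/e) (1 - (1 - 1/e)); linarith [hx.2]
      have hGx : phiFn e x - x < 0 := G_of_Faux_neg hx1 (Faux_neg hx.1 hx1)
      rw [deriv_Phi]
      have hp : 0 < (e)^2 * Real.exp (-(e) * (1 - x)) := by positivity
      nlinarith

lemma deriv_phi_abar : deriv (phiFn e) (1 - 1/e) = 1 := by
  rw [deriv_phi]
  have h1 : (1:ℝ) - (1 - 1/e) = 1/e := by ring
  rw [h1]
  have h2 : -e * (1/e) = -1 := by field_simp
  rw [h2, Real.exp_neg 1]
  have h3 : -e * (e)⁻¹ = -1 := by field_simp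
  rw [h3, Real.exp_neg 1]
  rw [pow_two]
  field_simp

lemma deriv2_phi_abar : deriv (deriv (phiFn e)) (1 - 1/e) = 0 := by
  have hfe : deriv (phiFn e)
      = fun x => (e)^2 * (Real.exp (-e*(1-x)) * Real.exp (-e * Real.exp (-e*(1-x)))) := by
    funext x; rw [deriv_phi]; ring
  rw [hfe]
  set α : ℝ := 1 - 1/e with hαdef
  have h1 := expE_hasDeriv (Real.exp 1) α
  have h2 := (h1.const_mul (-(Real.exp 1))).exp
  have h3 := h1.mul h2
  have h4 := h3.const_mul ((Real.exp 1)^2)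
  have h5 := h4.deriv
  have hE : Real.exp (-e * (1 - α)) = (e)⁻¹ := by
    have h1' : (1:ℝ) - α = 1/e := by rw [hαdef]; ring
    rw [h1']
    have h2' : -e * (1/e) = -1 := by field_simp
    rw [h2', Real.exp_neg 1]
  have hE2 : Real.exp (-e * Real.exp (-e * (1 - α))) = (e)⁻¹ := by
    rw [hE]
    have h3' : -e * (e)⁻¹ = -1 := by field_simp
    rw [h3', Real.exp_neg 1]
  rw [show (fun x => (e)^2 * (Real.exp (-e*(1-x)) * Real.exp (-e * Real.exp (-e*(1-x)))))
      = fun x => (e)^2 * (Real.exp (-e*(1-x)) * Real.exp (-(e) * Real.exp (-(e)*(1-x)))) from rfl]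
  rw [show deriv (fun x => (e)^2 * (Real.exp (-e*(1-x)) * Real.exp (-e * Real.exp (-e*(1-x))))) α = _ from h5, hE2, hE]
  have hne := Real.exp_ne_zero 1
  field_simp
  norm_num
end Ecase2

/-- for `d > 0`, `d ≠ e`, the local maximisers of `Φ_d` on `[0,1]` are exactly
the stable fixed points of `φ_d`; for `d = e` the unique fixed point `ᾱ = 1 − 1/e` is the
unique local maximiser of `Φ_e` and an inflection point of `φ_e`. -/
theorem statement4 :
    (∀ d : ℝ, 0 < d → d ≠ Real.exp 1 →
      ∀ α ∈ Set.Icc (0:ℝ) 1,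
        (IsLocalMaxOn (PhiFn d) (Set.Icc (0:ℝ) 1) α ↔
          phiFn d α = α ∧ deriv (phiFn d) α < 1)) ∧
    ((∀ α ∈ Set.Icc (0:ℝ) 1,
        (phiFn (Real.exp 1) α = α ↔ α = 1 - 1 / Real.exp 1)) ∧
     (∀ α ∈ Set.Icc (0:ℝ) 1,
        (IsLocalMaxOn (PhiFn (Real.exp 1)) (Set.Icc (0:ℝ) 1) α ↔ α = 1 - 1 / Real.exp 1)) ∧
     deriv (phiFn (Real.exp 1)) (1 - 1 / Real.exp 1) = 1 ∧
     deriv (deriv (phiFn (Real.exp 1))) (1 - 1 / Real.exp 1) = 0) := by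
  refine ⟨fun d hd hde α hα => part1 hd hde hα,
    fun α hα => fixed_iff_e hα, fun α hα => localmax_iff_e hα,
    deriv_phi_abar, deriv2_phi_abar⟩
end
end

section
/- For any d > 0, the iterates of φ_d converge as follows: for every x ∈ [0, α_0(d)), lim_{t→∞} φ_d^{∘t}(x) = α_*(d), and for every x ∈ (α_0(d), 1], lim_{t→∞} φ_d^{∘t}(x) = α^*(d), where φ_d^{∘t} denotes the t-fold iterate of φ_d. -/
open Filter Topology MeasureTheory ProbabilityTheory

noncomputable section

section TendstoLemmas
open Set

lemma tendsto_up (φ : ℝ → ℝ) (hm : Monotone φ) (hc : Continuous φ) {x L : ℝ}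
    (hxL : x ≤ L) (hL : φ L = L) (hup : ∀ y, x ≤ y → y < L → y < φ y) :
    Tendsto (fun t : ℕ => φ^[t] x) atTop (𝓝 L) := by
  set f : ℕ → ℝ := fun t => φ^[t] x with hf
  have hsucc : ∀ t, f (t + 1) = φ (f t) := fun t => Function.iterate_succ_apply' φ t x
  have key : ∀ t, x ≤ f t ∧ f t ≤ L ∧ f t ≤ f (t + 1) := by
    intro t
    induction t with
    | zero =>
      refine ⟨le_rfl, hxL, ?_⟩
      rw [hsucc]
      rcases lt_or_eq_of_le hxL with h | h
      · exact (hup x le_rfl h).le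
      · simp only [hf]; rw [Function.iterate_zero_apply, h, hL]
    | succ t ih =>
      obtain ⟨h1, h2, h3⟩ := ih
      refine ⟨h1.trans h3, ?_, ?_⟩
      · rw [hsucc]; calc φ (f t) ≤ φ L := hm h2
          _ = L := hL
      · have h4 := hm h3
        rw [← hsucc t, ← hsucc (t+1)] at h4; exact h4
  have hmono : Monotone f := monotone_nat_of_le_succ fun t => (key t).2.2
  have hbdd : BddAbove (Set.range f) := ⟨L, by rintro y ⟨t, rfl⟩; exact (key t).2.1⟩
  have hten : Tendsto f atTop (𝓝 (⨆ t, f t)) := tendsto_atTop_ciSup hmono hbdd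
  set ℓ := ⨆ t, f t with hℓ
  have hℓle : ℓ ≤ L := ciSup_le fun t => (key t).2.1
  have hxℓ : x ≤ ℓ := by
    have := le_ciSup hbdd 0
    simpa [hf] using this
  have hfix : φ ℓ = ℓ := by
    have h1 : Tendsto (fun t => f (t + 1)) atTop (𝓝 ℓ) := hten.comp (tendsto_add_atTop_nat 1)
    have h2 : Tendsto (fun t => φ (f t)) atTop (𝓝 (φ ℓ)) := (hc.tendsto ℓ).comp hten
    have : (fun t => f (t + 1)) = fun t => φ (f t) := funext hsucc
    rw [this] at h1
    exact tendsto_nhds_unique h2 h1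
  rcases lt_or_eq_of_le hℓle with h | h
  · exact absurd hfix (ne_of_gt (hup ℓ hxℓ h))
  · rwa [h] at hten

lemma tendsto_down (φ : ℝ → ℝ) (hm : Monotone φ) (hc : Continuous φ) {x L : ℝ}
    (hxL : L ≤ x) (hL : φ L = L) (hdown : ∀ y, L < y → y ≤ x → φ y < y) :
    Tendsto (fun t : ℕ => φ^[t] x) atTop (𝓝 L) := by
  set f : ℕ → ℝ := fun t => φ^[t] x with hf
  have hsucc : ∀ t, f (t + 1) = φ (f t) := fun t => Function.iterate_succ_apply' φ t x
  have key : ∀ t, f t ≤ x ∧ L ≤ f t ∧ f (t + 1) ≤ f t := by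
    intro t
    induction t with
    | zero =>
      refine ⟨le_rfl, hxL, ?_⟩
      rw [hsucc]
      rcases lt_or_eq_of_le hxL with h | h
      · exact (hdown x h le_rfl).le
      · simp only [hf]; rw [Function.iterate_zero_apply, ← h, hL]
    | succ t ih =>
      obtain ⟨h1, h2, h3⟩ := ih
      refine ⟨h3.trans h1, ?_, ?_⟩
      · rw [hsucc]; calc L = φ L := hL.symm
          _ ≤ φ (f t) := hm h2
      · have h4 := hm h3
        rw [← hsucc t, ← hsucc (t+1)] at h4; exact h4
  have hmono : Antitone f := antitone_nat_of_succ_le fun t => (key t).2.2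
  have hbdd : BddBelow (Set.range f) := ⟨L, by rintro y ⟨t, rfl⟩; exact (key t).2.1⟩
  have hten : Tendsto f atTop (𝓝 (⨅ t, f t)) := tendsto_atTop_ciInf hmono hbdd
  set ℓ := ⨅ t, f t with hℓ
  have hℓge : L ≤ ℓ := le_ciInf fun t => (key t).2.1
  have hxℓ : ℓ ≤ x := by
    have := ciInf_le hbdd 0
    simpa [hf] using this
  have hfix : φ ℓ = ℓ := by
    have h1 : Tendsto (fun t => f (t + 1)) atTop (𝓝 ℓ) := hten.comp (tendsto_add_atTop_nat 1)
    have h2 : Tendsto (fun t => φ (f t)) atTop (𝓝 (φ ℓ)) := (hc.tendsto ℓ).comp hten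
    have : (fun t => f (t + 1)) = fun t => φ (f t) := funext hsucc
    rw [this] at h1
    exact tendsto_nhds_unique h2 h1
  rcases lt_or_eq_of_le hℓge with h | h
  · exact absurd hfix (ne_of_lt (hdown ℓ h hxℓ))
  · rwa [← h] at hten

end TendstoLemmas

namespace St5
open Set Real

variable {d : ℝ}

def hFn (d α : ℝ) : ℝ := phiFn d α - α
def psi (d α : ℝ) : ℝ := d ^ 2 * Real.exp (-d * (1 - α)) * Real.exp (-d * Real.exp (-d * (1 - α)))
def uFn (d t : ℝ) : ℝ := t + d * Real.exp (-t)

lemma phi_pos (hd : 0 < d) (α : ℝ) : 0 < phiFn d α := by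
  have hlt : Real.exp (-d * Real.exp (-d * (1 - α))) < 1 := by
    apply Real.exp_lt_one_iff.mpr
    have := Real.exp_pos (-d * (1 - α)); nlinarith
  unfold phiFn; linarith

lemma phi_lt_one (d α : ℝ) : phiFn d α < 1 := by
  have := Real.exp_pos (-d * Real.exp (-d * (1 - α)))
  unfold phiFn; linarith

lemma phi_mono (hd : 0 < d) : StrictMono (phiFn d) := by
  intro a b hab
  have h1 : Real.exp (-d * (1 - a)) < Real.exp (-d * (1 - b)) := by
    apply Real.exp_lt_exp.mpr; nlinarith
  have h2 : -d * Real.exp (-d * (1 - b)) < -d * Real.exp (-d * (1 - a)) := by nlinarith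
  simpa [phiFn, sub_lt_sub_iff_left] using Real.exp_lt_exp.mpr h2

lemma phi_cont (d : ℝ) : Continuous (phiFn d) := by
  unfold phiFn; fun_prop

lemma hFn_cont (d : ℝ) : Continuous (hFn d) := by
  unfold hFn; exact (phi_cont d).sub continuous_id

lemma hasDerivAt_phi (d α : ℝ) : HasDerivAt (phiFn d) (psi d α) α := by
  have h1 : HasDerivAt (fun α : ℝ => -d * (1 - α)) d α := by
    simpa using ((hasDerivAt_id α).const_sub 1).const_mul (-d)
  have h2 := h1.exp
  have h3 := (h2.const_mul (-d)).exp
  have h4 := h3.const_sub 1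
  refine h4.congr_deriv ?_
  simp [psi, phiFn]; ring

lemma hasDerivAt_hFn (d α : ℝ) : HasDerivAt (hFn d) (psi d α - 1) α :=
  (hasDerivAt_phi d α).sub (hasDerivAt_id α)

lemma deriv_hFn (d α : ℝ) : deriv (hFn d) α = psi d α - 1 := (hasDerivAt_hFn d α).deriv

lemma psi_eq (hd : 0 < d) (α : ℝ) :
    psi d α = Real.exp (2 * Real.log d - uFn d (d * (1 - α))) := by
  have hde : Real.exp (Real.log d) = d := Real.exp_log hd
  rw [psi, uFn]
  rw [show (2 : ℝ) * Real.log d - (d * (1 - α) + d * Real.exp (-(d * (1 - α))))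
    = (Real.log d + Real.log d) + (-(d*(1-α))) + (-(d * Real.exp (-(d * (1 - α))))) by ring]
  rw [Real.exp_add, Real.exp_add, Real.exp_add, hde]
  have : -(d * (1-α)) = -d * (1-α) := by ring
  rw [this]
  ring_nf

lemma hasDerivAt_uFn (d t : ℝ) : HasDerivAt (uFn d) (1 - d * Real.exp (-t)) t := by
  have h1 : HasDerivAt (fun t : ℝ => Real.exp (-t)) (-Real.exp (-t)) t := by
    simpa using (hasDerivAt_id t).neg.exp
  exact ((hasDerivAt_id' t).add (h1.const_mul d)).congr_deriv (by ring)

lemma uFn_lb' (hd : 0 < d) {t : ℝ} (ht : t ≠ Real.log d) : Real.log d + 1 < uFn d t := by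
  have h1 : d * Real.exp (-t) = Real.exp (Real.log d - t) := by
    rw [Real.exp_sub, Real.exp_log hd, Real.exp_neg]; ring
  have h2 := Real.add_one_lt_exp (x := Real.log d - t) (by intro h; apply ht; linarith)
  rw [uFn, h1]; linarith

lemma uFn_strictMonoOn (hd : 0 < d) : StrictMonoOn (uFn d) (Ici (Real.log d)) := by
  apply strictMonoOn_of_deriv_pos (convex_Ici _)
  · have : Continuous (uFn d) := by unfold uFn; fun_prop
    exact this.continuousOn
  · intro t ht
    rw [interior_Ici] at ht
    rw [(hasDerivAt_uFn d t).deriv]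
    have h1 : Real.exp (-t) < Real.exp (-Real.log d) := Real.exp_lt_exp.mpr (by simpa using ht)
    have h3 : d * Real.exp (-t) < 1 := by
      have := mul_lt_mul_of_pos_left h1 hd
      rwa [Real.exp_neg (Real.log d), Real.exp_log hd, mul_inv_cancel₀ hd.ne'] at this
    linarith

lemma uFn_strictAntiOn (hd : 0 < d) : StrictAntiOn (uFn d) (Iic (Real.log d)) := by
  apply strictAntiOn_of_deriv_neg (convex_Iic _)
  · have : Continuous (uFn d) := by unfold uFn; fun_prop
    exact this.continuousOn
  · intro t ht
    rw [interior_Iic] at ht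
    rw [(hasDerivAt_uFn d t).deriv]
    have h1 : Real.exp (-Real.log d) < Real.exp (-t) := Real.exp_lt_exp.mpr (by simpa using ht)
    have h3 : 1 < d * Real.exp (-t) := by
      have := mul_lt_mul_of_pos_left h1 hd
      rwa [Real.exp_neg (Real.log d), Real.exp_log hd, mul_inv_cancel₀ hd.ne'] at this
    linarith

lemma strictAnti_glue {f : ℝ → ℝ} {p : ℝ} (h1 : StrictAntiOn f (Iic p))
    (h2 : StrictAntiOn f (Ici p)) : StrictAnti f := by
  intro a b hab
  rcases le_total b p with hb | hb
  · exact h1 (hab.le.trans hb) hb hab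
  rcases le_total p a with ha | ha
  · exact h2 ha hb hab
  rcases eq_or_lt_of_le ha with rfl | hap
  · exact h2 self_mem_Ici hb hab
  have h3 : f p < f a := h1 hap.le self_mem_Iic hap
  rcases eq_or_lt_of_le hb with rfl | hpb
  · exact h3
  · exact (h2 self_mem_Ici hb hpb).trans h3

lemma hFn_zero_pos (hd : 0 < d) : 0 < hFn d 0 := by
  have := phi_pos hd 0; unfold hFn; linarith

lemma hFn_one_neg (d : ℝ) : hFn d 1 < 0 := by
  have := phi_lt_one d 1; unfold hFn; linarith

lemma ivt_zero (d : ℝ) {a b : ℝ} (hab : a ≤ b) (ha : 0 ≤ hFn d a) (hb : hFn d b ≤ 0) :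
    ∃ z ∈ Icc a b, hFn d z = 0 := by
  have h := intermediate_value_Icc' hab (hFn_cont d).continuousOn
  obtain ⟨z, hz, hz0⟩ := h (show (0:ℝ) ∈ Icc (hFn d b) (hFn d a) from ⟨hb, ha⟩)
  exact ⟨z, hz, hz0⟩

lemma ivt_zero' (d : ℝ) {a b : ℝ} (hab : a ≤ b) (ha : hFn d a ≤ 0) (hb : 0 ≤ hFn d b) :
    ∃ z ∈ Icc a b, hFn d z = 0 := by
  have h := intermediate_value_Icc hab (hFn_cont d).continuousOn
  obtain ⟨z, hz, hz0⟩ := h (show (0:ℝ) ∈ Icc (hFn d a) (hFn d b) from ⟨ha, hb⟩)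
  exact ⟨z, hz, hz0⟩

lemma psi_lt_one (hd : 0 < d) (hde : d ≤ Real.exp 1) {α : ℝ}
    (hα : α ≠ 1 - Real.log d / d) : psi d α < 1 := by
  have hlog : Real.log d ≤ 1 := by
    calc Real.log d ≤ Real.log (Real.exp 1) := Real.log_le_log hd hde
      _ = 1 := Real.log_exp 1
  have ht : d * (1 - α) ≠ Real.log d := by
    intro h
    apply hα
    field_simp
    linarith
  have hu := uFn_lb' hd ht
  rw [psi_eq hd]
  apply Real.exp_lt_one_iff.mpr
  linarith

lemma hFn_strictAnti (hd : 0 < d) (hde : d ≤ Real.exp 1) : StrictAnti (hFn d) := by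
  set p := 1 - Real.log d / d with hp
  have hcont := (hFn_cont d).continuousOn (s := Iic p)
  have hcont' := (hFn_cont d).continuousOn (s := Ici p)
  have hneg : ∀ α, α ≠ p → deriv (hFn d) α < 0 := by
    intro α hα
    rw [deriv_hFn]
    have := psi_lt_one hd hde (α := α) hα
    linarith
  apply strictAnti_glue (p := p)
  · apply strictAntiOn_of_deriv_neg (convex_Iic p) hcont
    intro α hα; rw [interior_Iic] at hα; exact hneg α (ne_of_lt hα)
  · apply strictAntiOn_of_deriv_neg (convex_Ici p) hcont'
    intro α hα; rw [interior_Ici] at hα; exact hneg α (ne_of_gt hα)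

/-- Main structural result for `d ≤ e`. -/
lemma small_main (hd : 0 < d) (hde : d ≤ Real.exp 1) :
    ∃ z : ℝ, z ∈ Icc (0:ℝ) 1 ∧ phiFn d z = z ∧
      alphaMin d = z ∧ alphaMax d = z ∧ alphaMid d = z ∧
      (∀ y, y < z → y < phiFn d y) ∧ (∀ y, z < y → phiFn d y < y) := by
  have hanti := hFn_strictAnti hd hde
  obtain ⟨z, hzmem, hz0⟩ := ivt_zero d (le_of_lt one_pos) (hFn_zero_pos hd).le (hFn_one_neg d).le
  have hfix : phiFn d z = z := by have := hz0; unfold hFn at this; linarith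
  have hSet : {α : ℝ | α ∈ Icc (0:ℝ) 1 ∧ phiFn d α = α} = {z} := by
    ext α
    simp only [mem_setOf_eq, mem_singleton_iff]
    constructor
    · rintro ⟨hmem, hfixα⟩
      have hα0 : hFn d α = 0 := by unfold hFn; rw [hfixα]; ring
      by_contra hne
      rcases lt_or_gt_of_ne hne with h | h
      · have := hanti h; rw [hα0, hz0] at this; exact lt_irrefl 0 this
      · have := hanti h; rw [hα0, hz0] at this; exact lt_irrefl 0 this
    · rintro rfl; exact ⟨hzmem, hfix⟩
  have hmin : alphaMin d = z := by rw [alphaMin, hSet]; exact csInf_singleton z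
  have hmax : alphaMax d = z := by rw [alphaMax, hSet]; exact csSup_singleton z
  have hmid : alphaMid d = z := by rw [alphaMid, if_pos hde]; exact hmin
  refine ⟨z, hzmem, hfix, hmin, hmax, hmid, ?_, ?_⟩
  · intro y hy
    have := hanti hy
    rw [hz0] at this
    unfold hFn at this; linarith
  · intro y hy
    have := hanti hy
    rw [hz0] at this
    unfold hFn at this; linarith

set_option maxHeartbeats 2000000 in
lemma big_main (hd : 0 < d) (hde : Real.exp 1 < d) :
    ∃ z1 z2 z3 : ℝ, 0 < z1 ∧ z1 < z2 ∧ z2 < z3 ∧ z3 < 1 ∧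
      phiFn d z1 = z1 ∧ phiFn d z2 = z2 ∧ phiFn d z3 = z3 ∧
      alphaMin d = z1 ∧ alphaMax d = z3 ∧ alphaMid d = z2 ∧
      (∀ y, 0 ≤ y → y < z1 → y < phiFn d y) ∧
      (∀ y, z1 < y → y < z2 → phiFn d y < y) ∧
      (∀ y, z2 < y → y < z3 → y < phiFn d y) ∧
      (∀ y, z3 < y → y ≤ 1 → phiFn d y < y) := by
  have h1e : (1:ℝ) < Real.exp 1 := by
    have := Real.add_one_lt_exp (one_ne_zero (α := ℝ)); linarith
  have hd1 : 1 < d := h1e.trans hde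
  have hlogd : 1 < Real.log d := by
    have := Real.log_lt_log (Real.exp_pos 1) hde
    rwa [Real.log_exp] at this
  set p : ℝ := 1 - Real.log d / d with hpdef
  set q : ℝ := 1 - 1 / d with hqdef
  have hp0 : 0 < p := by
    have h : Real.log d < d := by
      have := Real.log_lt_sub_one_of_pos hd (ne_of_gt hd1); linarith
    have : Real.log d / d < 1 := (div_lt_one hd).mpr h
    simp only [hpdef]; linarith
  have hpq : p < q := by
    have : 1 / d < Real.log d / d := (div_lt_div_iff_of_pos_right hd).mpr hlogd
    simp only [hpdef, hqdef]; linarith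
  have hq1 : q < 1 := by
    have : 0 < 1 / d := by positivity
    simp only [hqdef]; linarith
  have hp1 : p < 1 := lt_trans hpq hq1
  -- key inequality : log d < d / e
  have hkey : Real.log d < d / Real.exp 1 := by
    have hne : d / Real.exp 1 ≠ 1 := by
      intro h
      rw [div_eq_one_iff_eq (Real.exp_pos 1).ne'] at h
      rw [h] at hde; exact lt_irrefl _ hde
    have h := Real.log_lt_sub_one_of_pos (div_pos hd (Real.exp_pos 1)) hne
    rw [Real.log_div hd.ne' (Real.exp_pos 1).ne', Real.log_exp] at h
    linarith
  have hdp : d * (1 - p) = Real.log d := by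
    simp only [hpdef]; field_simp; ring
  have hdq : d * (1 - q) = 1 := by
    simp only [hqdef]; field_simp; ring
  -- hFn at p is negative
  have hexpp : Real.exp (-d * (1 - p)) = d⁻¹ := by
    rw [show -d * (1 - p) = -(d * (1 - p)) by ring, hdp, Real.exp_neg, Real.exp_log hd]
  have hfp : hFn d p < 0 := by
    have e1 : Real.exp (-d * Real.exp (-d * (1 - p))) = Real.exp (-1) := by
      rw [hexpp]; congr 1; field_simp
    have h2 : Real.log d / d < Real.exp (-1) := by
      rw [Real.exp_neg, div_lt_iff₀ hd,
        show (Real.exp 1)⁻¹ * d = d / Real.exp 1 by ring]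
      exact hkey
    unfold hFn phiFn
    rw [e1]
    simp only [hpdef]; linarith
  -- hFn at q is positive
  have hfq : 0 < hFn d q := by
    have e1 : Real.exp (-d * Real.exp (-d * (1 - q))) = Real.exp (-(d * Real.exp (-1))) := by
      rw [show -d * (1 - q) = -(d * (1 - q)) by ring, hdq]; ring_nf
    have h2 : Real.exp (-(d * Real.exp (-1))) < 1 / d := by
      have hlt : Real.log d < d * Real.exp (-1) := by
        rw [Real.exp_neg, show d * (Real.exp 1)⁻¹ = d / Real.exp 1 by ring]
        exact hkey
      have := Real.exp_lt_exp.mpr (show -(d * Real.exp (-1)) < -Real.log d by linarith)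
      rwa [Real.exp_neg (Real.log d), Real.exp_log hd, ← one_div] at this
    unfold hFn phiFn
    rw [e1]
    simp only [hqdef]; linarith
  -- convexity on [0, p]
  have hder_mono : StrictMonoOn (deriv (hFn d)) (interior (Icc (0:ℝ) p)) := by
    rw [interior_Icc]
    intro a ha b hb hab
    rw [deriv_hFn, deriv_hFn, psi_eq hd, psi_eq hd]
    have hta : Real.log d < d * (1 - a) := by
      rw [← hdp]; nlinarith [ha.2, hb.1]
    have htb : Real.log d < d * (1 - b) := by
      rw [← hdp]; nlinarith [hb.2]
    have htba : d * (1 - b) < d * (1 - a) := by nlinarith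
    have hu := uFn_strictMonoOn hd (le_of_lt htb) (le_of_lt hta) htba
    have := Real.exp_lt_exp.mpr
      (show 2 * Real.log d - uFn d (d * (1 - a)) < 2 * Real.log d - uFn d (d * (1 - b)) by linarith)
    linarith
  have hconv : StrictConvexOn ℝ (Icc (0:ℝ) p) (hFn d) :=
    StrictMonoOn.strictConvexOn_of_deriv (convex_Icc _ _) (hFn_cont d).continuousOn hder_mono
  -- concavity on [p, 1]
  have hder_anti : StrictAntiOn (deriv (hFn d)) (interior (Icc p 1)) := by
    rw [interior_Icc]
    intro a ha b hb hab
    rw [deriv_hFn, deriv_hFn, psi_eq hd, psi_eq hd]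
    have hta : d * (1 - a) < Real.log d := by
      rw [← hdp]; nlinarith [ha.1]
    have htb : d * (1 - b) < Real.log d := by
      rw [← hdp]; nlinarith [hb.1, ha.1]
    have htba : d * (1 - b) < d * (1 - a) := by nlinarith
    have hu := uFn_strictAntiOn hd (le_of_lt htb) (le_of_lt hta) htba
    have := Real.exp_lt_exp.mpr
      (show 2 * Real.log d - uFn d (d * (1 - b)) < 2 * Real.log d - uFn d (d * (1 - a)) by linarith)
    linarith
  have hconc : StrictConcaveOn ℝ (Icc p 1) (hFn d) :=
    StrictAntiOn.strictConcaveOn_of_deriv (convex_Icc _ _) (hFn_cont d).continuousOn hder_anti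
  -- z1 : smallest zero in [0, p]
  set A : Set ℝ := {α : ℝ | α ∈ Icc (0:ℝ) p ∧ hFn d α = 0} with hAdef
  have hA_closed : IsClosed A := isClosed_Icc.inter (isClosed_eq (hFn_cont d) continuous_const)
  have hA_ne : A.Nonempty := by
    obtain ⟨z, hz, hz0⟩ := ivt_zero d hp0.le (hFn_zero_pos hd).le hfp.le
    exact ⟨z, hz, hz0⟩
  have hA_bdd : BddBelow A := ⟨0, fun α hα => hα.1.1⟩
  set z1 : ℝ := sInf A with hz1def
  have hz1A : z1 ∈ A := hA_closed.csInf_mem hA_ne hA_bdd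
  have hz10 : hFn d z1 = 0 := hz1A.2
  have h0z1 : 0 < z1 := by
    rcases eq_or_lt_of_le hz1A.1.1 with h | h
    · exfalso; rw [← h] at hz10; have := hFn_zero_pos hd; linarith
    · exact h
  have hz1p : z1 < p := by
    rcases eq_or_lt_of_le hz1A.1.2 with h | h
    · exfalso; rw [h] at hz10; linarith
    · exact h
  have sign1 : ∀ y, 0 ≤ y → y < z1 → 0 < hFn d y := by
    intro y hy0 hyz
    by_contra hle
    push_neg at hle
    obtain ⟨z', hz'mem, hz'0⟩ := ivt_zero d hy0 (hFn_zero_pos hd).le hle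
    have hz'A : z' ∈ A := ⟨⟨hz'mem.1, by linarith [hz'mem.2]⟩, hz'0⟩
    have := csInf_le hA_bdd hz'A
    linarith [hz'mem.2]
  have sign2a : ∀ y, z1 < y → y ≤ p → hFn d y < 0 := by
    intro y h1 h2
    rcases eq_or_lt_of_le h2 with rfl | h2'
    · exact hfp
    have hpz1 : (0:ℝ) < p - z1 := by linarith
    set A' : ℝ := (p - y) / (p - z1) with hA'def
    set B' : ℝ := (y - z1) / (p - z1) with hB'def
    have hA' : 0 < A' := div_pos (by linarith) hpz1
    have hB' : 0 < B' := div_pos (by linarith) hpz1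
    have hsum : A' + B' = 1 := by simp only [hA'def, hB'def]; field_simp; ring
    have hcomb := hconv.2 (show z1 ∈ Icc (0:ℝ) p from ⟨h0z1.le, hz1p.le⟩)
      (show p ∈ Icc (0:ℝ) p from ⟨hp0.le, le_rfl⟩) (ne_of_lt hz1p) hA' hB' hsum
    have hyeq : A' • z1 + B' • p = y := by
      simp only [smul_eq_mul, hA'def, hB'def]; field_simp; ring
    rw [hyeq, smul_eq_mul, smul_eq_mul, hz10] at hcomb
    have : B' * hFn d p < 0 := mul_neg_of_pos_of_neg hB' hfp
    linarith
  -- z2, z3 : extreme points of {hFn ≥ 0} in [p, 1]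
  set C : Set ℝ := {α : ℝ | α ∈ Icc p 1 ∧ 0 ≤ hFn d α} with hCdef
  have hC_closed : IsClosed C := isClosed_Icc.inter (isClosed_le continuous_const (hFn_cont d))
  have hqC : q ∈ C := ⟨⟨hpq.le, hq1.le⟩, hfq.le⟩
  have hC_ne : C.Nonempty := ⟨q, hqC⟩
  have hC_bddB : BddBelow C := ⟨p, fun α hα => hα.1.1⟩
  have hC_bddA : BddAbove C := ⟨1, fun α hα => hα.1.2⟩
  set z2 : ℝ := sInf C with hz2def
  set z3 : ℝ := sSup C with hz3def
  have hz2C : z2 ∈ C := hC_closed.csInf_mem hC_ne hC_bddB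
  have hz3C : z3 ∈ C := hC_closed.csSup_mem hC_ne hC_bddA
  have hz2q : z2 ≤ q := csInf_le hC_bddB hqC
  have hqz3 : q ≤ z3 := le_csSup hC_bddA hqC
  have hpz2 : p < z2 := by
    rcases eq_or_lt_of_le hz2C.1.1 with h | h
    · exfalso; have h2 := hz2C.2; rw [← h] at h2; linarith
    · exact h
  have hz31 : z3 ≤ 1 := hz3C.1.2
  have hz20 : hFn d z2 = 0 := by
    obtain ⟨z', hz'mem, hz'0⟩ := ivt_zero' d hpz2.le hfp.le hz2C.2
    have hz'C : z' ∈ C := ⟨⟨hz'mem.1, le_trans hz'mem.2 hz2C.1.2⟩, hz'0.ge⟩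
    have h := csInf_le hC_bddB hz'C
    have : z' = z2 := le_antisymm hz'mem.2 h
    rw [← this]; exact hz'0
  have hz30 : hFn d z3 = 0 := by
    obtain ⟨z', hz'mem, hz'0⟩ := ivt_zero d hz31 hz3C.2 (hFn_one_neg d).le
    have hz'C : z' ∈ C := ⟨⟨le_trans hz3C.1.1 hz'mem.1, hz'mem.2⟩, hz'0.ge⟩
    have h := le_csSup hC_bddA hz'C
    have : z' = z3 := le_antisymm h hz'mem.1
    rw [← this]; exact hz'0
  have hz2q' : z2 < q := by
    rcases eq_or_lt_of_le hz2q with h | h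
    · exfalso; rw [h] at hz20; linarith
    · exact h
  have hqz3' : q < z3 := by
    rcases eq_or_lt_of_le hqz3 with h | h
    · exfalso; rw [← h] at hz30; linarith
    · exact h
  have hz23 : z2 < z3 := lt_trans hz2q' hqz3'
  have hz31' : z3 < 1 := by
    rcases eq_or_lt_of_le hz31 with h | h
    · exfalso; rw [h] at hz30; have := hFn_one_neg d; linarith
    · exact h
  have sign2b : ∀ y, p ≤ y → y < z2 → hFn d y < 0 := by
    intro y h1 h2
    by_contra hle
    push_neg at hle
    have hyC : y ∈ C := ⟨⟨h1, by linarith⟩, hle⟩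
    have := csInf_le hC_bddB hyC
    linarith
  have sign3 : ∀ y, z2 < y → y < z3 → 0 < hFn d y := by
    intro y h1 h2
    have hz32 : (0:ℝ) < z3 - z2 := by linarith
    set A' : ℝ := (z3 - y) / (z3 - z2) with hA'def
    set B' : ℝ := (y - z2) / (z3 - z2) with hB'def
    have hA' : 0 < A' := div_pos (by linarith) hz32
    have hB' : 0 < B' := div_pos (by linarith) hz32
    have hsum : A' + B' = 1 := by simp only [hA'def, hB'def]; field_simp; ring
    have hcomb := hconc.2 (show z2 ∈ Icc p 1 from ⟨hpz2.le, by linarith⟩)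
      (show z3 ∈ Icc p 1 from ⟨by linarith, hz31⟩) (ne_of_lt hz23) hA' hB' hsum
    have hyeq : A' • z2 + B' • z3 = y := by
      simp only [smul_eq_mul, hA'def, hB'def]; field_simp; ring
    rw [hyeq, smul_eq_mul, smul_eq_mul, hz20, hz30] at hcomb
    linarith
  have sign4 : ∀ y, z3 < y → y ≤ 1 → hFn d y < 0 := by
    intro y h1 h2
    by_contra hle
    push_neg at hle
    have hyC : y ∈ C := ⟨⟨by linarith [hz3C.1.1], h2⟩, hle⟩
    have := le_csSup hC_bddA hyC
    linarith
  -- fixed point equations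
  have hfix1 : phiFn d z1 = z1 := by have := hz10; unfold hFn at this; linarith
  have hfix2 : phiFn d z2 = z2 := by have := hz20; unfold hFn at this; linarith
  have hfix3 : phiFn d z3 = z3 := by have := hz30; unfold hFn at this; linarith
  have hz12 : z1 < z2 := by linarith
  -- characterization of the fixed point set
  have hS : {α : ℝ | α ∈ Icc (0:ℝ) 1 ∧ phiFn d α = α} = {z1, z2, z3} := by
    ext α
    simp only [mem_setOf_eq, mem_insert_iff, mem_singleton_iff]
    constructor
    · rintro ⟨⟨ha0, ha1⟩, hfix⟩
      have hα0 : hFn d α = 0 := by unfold hFn; rw [hfix]; ring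
      rcases lt_trichotomy α z1 with h | h | h
      · exact absurd hα0 (ne_of_gt (sign1 α ha0 h))
      · exact Or.inl h
      rcases lt_trichotomy α z2 with h2 | h2 | h2
      · rcases le_or_gt α p with hp' | hp'
        · exact absurd hα0 (ne_of_lt (sign2a α h hp'))
        · exact absurd hα0 (ne_of_lt (sign2b α hp'.le h2))
      · exact Or.inr (Or.inl h2)
      rcases lt_trichotomy α z3 with h3 | h3 | h3
      · exact absurd hα0 (ne_of_gt (sign3 α h2 h3))
      · exact Or.inr (Or.inr h3)
      · exact absurd hα0 (ne_of_lt (sign4 α h3 ha1))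
    · rintro (rfl | rfl | rfl)
      · exact ⟨⟨h0z1.le, by linarith⟩, hfix1⟩
      · exact ⟨⟨by linarith, by linarith⟩, hfix2⟩
      · exact ⟨⟨by linarith, hz31⟩, hfix3⟩
  have hfin : ({z1, z2, z3} : Set ℝ).Finite :=
    (Set.finite_singleton z3).insert z2 |>.insert z1
  have hminv : alphaMin d = z1 := by
    rw [alphaMin, hS]
    apply le_antisymm
    · exact csInf_le hfin.bddBelow (by simp)
    · apply le_csInf ⟨z1, by simp⟩
      rintro b hb
      simp only [mem_insert_iff, mem_singleton_iff] at hb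
      rcases hb with rfl | rfl | rfl <;> linarith
  have hmaxv : alphaMax d = z3 := by
    rw [alphaMax, hS]
    apply le_antisymm
    · apply csSup_le ⟨z1, by simp⟩
      rintro b hb
      simp only [mem_insert_iff, mem_singleton_iff] at hb
      rcases hb with rfl | rfl | rfl <;> linarith
    · exact le_csSup hfin.bddAbove (by simp)
  have hmidv : alphaMid d = z2 := by
    rw [alphaMid, if_neg (not_le.mpr hde)]
    have hT : {α : ℝ | α ∈ Ioo (alphaMin d) (alphaMax d) ∧ phiFn d α = α} = {z2} := by
      rw [hminv, hmaxv]
      ext α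
      simp only [mem_setOf_eq, mem_Ioo, mem_singleton_iff]
      constructor
      · rintro ⟨⟨hl, hr⟩, hfix⟩
        have hmem : α ∈ {α : ℝ | α ∈ Icc (0:ℝ) 1 ∧ phiFn d α = α} :=
          ⟨⟨by linarith, by linarith⟩, hfix⟩
        rw [hS] at hmem
        simp only [mem_insert_iff, mem_singleton_iff] at hmem
        rcases hmem with rfl | rfl | rfl
        · linarith
        · rfl
        · linarith
      · rintro rfl
        exact ⟨⟨hz12, hz23⟩, hfix2⟩
    rw [hT]
    exact csInf_singleton z2
  refine ⟨z1, z2, z3, h0z1, hz12, hz23, hz31', hfix1, hfix2, hfix3, hminv, hmaxv, hmidv,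
    ?_, ?_, ?_, ?_⟩
  · intro y hy0 hyz
    have := sign1 y hy0 hyz; unfold hFn at this; linarith
  · intro y h1 h2
    rcases le_or_gt y p with hp' | hp'
    · have := sign2a y h1 hp'; unfold hFn at this; linarith
    · have := sign2b y hp'.le h2; unfold hFn at this; linarith
  · intro y h1 h2
    have := sign3 y h1 h2; unfold hFn at this; linarith
  · intro y h1 h2
    have := sign4 y h1 h2; unfold hFn at this; linarith

end St5

open St5 in
/-- for any `d > 0` the iterates of `φ_d` converge to `α_*` from any
start in `[0, α_0)` and to `α^*` from any start in `(α_0, 1]`. -/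
theorem statement5 (d : ℝ) (hd : 0 < d) :
    (∀ x : ℝ, 0 ≤ x → x < alphaMid d →
      Tendsto (fun t : ℕ => (phiFn d)^[t] x) atTop (𝓝 (alphaMin d))) ∧
    (∀ x : ℝ, alphaMid d < x → x ≤ 1 →
      Tendsto (fun t : ℕ => (phiFn d)^[t] x) atTop (𝓝 (alphaMax d))) := by
  have hm := (phi_mono hd).monotone
  have hc := phi_cont d
  by_cases hde : d ≤ Real.exp 1
  · obtain ⟨z, hzmem, hfix, hmin, hmax, hmid, hup, hdown⟩ := small_main hd hde
    constructor
    · intro x hx0 hxz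
      rw [hmid] at hxz
      rw [hmin]
      exact tendsto_up (phiFn d) hm hc hxz.le hfix (fun y _ hy => hup y hy)
    · intro x hzx hx1
      rw [hmid] at hzx
      rw [hmax]
      exact tendsto_down (phiFn d) hm hc hzx.le hfix (fun y hy _ => hdown y hy)
  · push_neg at hde
    obtain ⟨z1, z2, z3, h01, h12, h23, h31, hf1, hf2, hf3, hmin, hmax, hmid,
      s1, s2, s3, s4⟩ := big_main hd hde
    constructor
    · intro x hx0 hxz
      rw [hmid] at hxz
      rw [hmin]
      rcases le_or_gt x z1 with hle | hlt
      · exact tendsto_up (phiFn d) hm hc hle hf1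
          (fun y hxy hyz => s1 y (hx0.trans hxy) hyz)
      · exact tendsto_down (phiFn d) hm hc hlt.le hf1
          (fun y h1y hyx => s2 y h1y (lt_of_le_of_lt hyx hxz))
    · intro x hzx hx1
      rw [hmid] at hzx
      rw [hmax]
      rcases le_or_gt x z3 with hle | hlt
      · exact tendsto_up (phiFn d) hm hc hle hf3
          (fun y hxy hyz => s3 y (lt_of_lt_of_le hzx hxy) hyz)
      · exact tendsto_down (phiFn d) hm hc hlt.le hf3
          (fun y h3y hyx => s4 y h3y (hyx.trans hx1))
end
end

section
/- For any c_0, c_1 > 0 there exists c_2 > 0 such that for all n > 0 the following holds. Suppose w : {1,…,n} → (0,∞) is any function such that (1/n)·Σ_{i=1}^n w_i·1{w_i > t} ≤ c_0·exp(−c_1·t) for every t ≥ 1, and suppose P_1, …, P_ℓ is any partition of {1,…,n} into pairwise disjoint sets such that (1/n)·Σ_{j=1}^ℓ |P_j|·1{|P_j| > t} ≤ c_0·exp(−c_1·t) for every t ≥ 1. Then (1/n)·Σ_{j=1}^ℓ ( Σ_{i ∈ P_j} w_i )^2 ≤ c_2. -/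
/-- Discrete layer-cake pointwise bound. -/
lemma st16_layer (m : ℕ) (x : ℝ) (hx : 0 ≤ x) :
    ∀ N : ℕ, x ≤ N + 1 →
      x ^ m ≤ 1 + ∑ k ∈ Finset.range N,
        (if ((k : ℝ) + 1) < x then (((k : ℝ) + 2) ^ m - ((k : ℝ) + 1) ^ m) else 0) := by
  intro N
  induction N with
  | zero =>
      intro h
      simp only [Finset.range_zero, Finset.sum_empty, add_zero]
      exact pow_le_one₀ hx (by simpa using h)
  | succ N ih =>
      intro h
      by_cases hx2 : x ≤ N + 1
      · have h1 := ih hx2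
        rw [Finset.sum_range_succ]
        have h2 : (0:ℝ) ≤ if ((N : ℝ) + 1) < x then (((N : ℝ) + 2) ^ m - ((N : ℝ) + 1) ^ m) else 0 := by
          split
          · have hle : ((N:ℝ)+1) ≤ (N:ℝ)+2 := by linarith
            have := pow_le_pow_left₀ (by positivity : (0:ℝ) ≤ (N:ℝ)+1) hle m
            linarith
          · exact le_rfl
        linarith
      · push_neg at hx2
        have hall : ∑ k ∈ Finset.range (N+1),
            (if ((k : ℝ) + 1) < x then (((k : ℝ) + 2) ^ m - ((k : ℝ) + 1) ^ m) else 0)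
            = ∑ k ∈ Finset.range (N+1), ((((k : ℝ) + 2) ^ m - ((k : ℝ) + 1) ^ m)) := by
          refine Finset.sum_congr rfl ?_
          intro k hk
          rw [Finset.mem_range] at hk
          have : ((k:ℝ)+1) < x := by
            have : (k:ℝ) ≤ (N:ℝ) := by exact_mod_cast Nat.lt_succ_iff.mp hk
            linarith
          rw [if_pos this]
        rw [hall]
        have tele := Finset.sum_range_sub (f := fun k => ((k:ℝ) + 1) ^ m) (N+1)
        have tele' : ∑ k ∈ Finset.range (N+1), ((((k : ℝ) + 2) ^ m - ((k : ℝ) + 1) ^ m)) =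
            (((N:ℝ) + 2) ^ m - 1) := by
          rw [show (((N:ℝ)+2)^m - 1) = ((((N+1:ℕ)):ℝ)+1)^m - (((0:ℕ):ℝ)+1)^m by push_cast; ring,
            ← tele]
          exact Finset.sum_congr rfl fun k _ => by push_cast; ring
        rw [tele']
        have : x ^ m ≤ ((N:ℝ)+2) ^ m := by
          refine pow_le_pow_left₀ hx ?_ m
          push_cast at h
          linarith
        linarith

/-- Key lemma: exponential tail bound on a nonnegative family implies bounded higher moments. -/
lemma st16_key {ι : Type*} [Fintype ι] (c0 c1 B : ℝ) (hc0 : 0 < c0) (hc1 : 0 < c1)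
    (m : ℕ) (hm : 1 ≤ m) (n : ℕ) (a : ι → ℝ) (ha : ∀ i, 0 ≤ a i)
    (hbase : ∑ i, a i ≤ B * n)
    (htail : ∀ t : ℝ, 1 ≤ t →
      ∑ i, (if t < a i then a i else 0) ≤ c0 * Real.exp (-c1 * t) * n) :
    ∑ i, a i ^ (m + 1) ≤
      (B + c0 * ((4 * m / c1) ^ m * (1 - Real.exp (-(c1 / 2)))⁻¹)) * n := by
  set s : ℝ := Real.exp (-(c1 / 2)) with hs_def
  have hs0 : 0 < s := Real.exp_pos _
  have hs1 : s < 1 := Real.exp_lt_one_iff.mpr (by linarith)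
  have hm0 : (0:ℝ) < (m:ℝ) := by exact_mod_cast hm
  have hn0 : (0:ℝ) ≤ (n:ℝ) := Nat.cast_nonneg n
  have hsum_nonneg : (0:ℝ) ≤ ∑ i, a i := Finset.sum_nonneg fun i _ => ha i
  set N : ℕ := ⌈∑ i, a i⌉₊ with hN_def
  have haN : ∀ i, a i ≤ (N : ℝ) + 1 := by
    intro i
    have h1 : a i ≤ ∑ i, a i := Finset.single_le_sum (fun i _ => ha i) (Finset.mem_univ i)
    have h2 : (∑ i, a i) ≤ (N : ℝ) := Nat.le_ceil _
    linarith
  have hcoef : ∀ k : ℕ, (((k:ℝ)+2)^m - ((k:ℝ)+1)^m) * (c0 * Real.exp (-c1 * ((k:ℝ)+1)) * n)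
      ≤ c0 * (n:ℝ) * ((4 * m / c1) ^ m * s ^ k) := by
    intro k
    have hk0 : (0:ℝ) ≤ (k:ℝ) := Nat.cast_nonneg k
    set E : ℝ := Real.exp (c1 / (2*m) * ((k:ℝ)+1)) with hE_def
    have hE0 : 0 < E := Real.exp_pos _
    have hexp : c1 / (2*m) * ((k:ℝ)+1) ≤ E := by
      have := Real.add_one_le_exp (c1 / (2*m) * ((k:ℝ)+1))
      rw [← hE_def] at this
      linarith
    have hexp' : c1 * ((k:ℝ)+1) ≤ 2*m*E := by
      have h2m : (0:ℝ) < 2*m := by positivity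
      rw [div_mul_eq_mul_div, div_le_iff₀ h2m] at hexp
      nlinarith
    have hstep : (k:ℝ) + 2 ≤ (4*m/c1) * E := by
      rw [div_mul_eq_mul_div, le_div_iff₀ hc1]
      nlinarith
    have hpow : ((k:ℝ)+2)^m ≤ (4*m/c1)^m * Real.exp ((c1/2) * ((k:ℝ)+1)) := by
      have h := pow_le_pow_left₀ (by positivity) hstep m
      rw [mul_pow, hE_def, ← Real.exp_nat_mul] at h
      have hre : (m:ℝ) * (c1 / (2*m) * ((k:ℝ)+1)) = (c1/2) * ((k:ℝ)+1) := by
        field_simp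
      rwa [hre] at h
    have hskk : Real.exp (-c1 * ((k:ℝ)+1)) * Real.exp ((c1/2) * ((k:ℝ)+1)) = s ^ (k+1) := by
      rw [← Real.exp_add, hs_def, ← Real.exp_nat_mul]
      congr 1
      push_cast
      ring
    have hsk : s ^ (k+1) ≤ s ^ k := by
      have h1 : (0:ℝ) ≤ s^k := by positivity
      calc s^(k+1) = s^k * s := by ring
        _ ≤ s^k * 1 := by nlinarith
        _ = s^k := by ring
    have hsub : ((k:ℝ)+2)^m - ((k:ℝ)+1)^m ≤ ((k:ℝ)+2)^m := by
      have : (0:ℝ) ≤ ((k:ℝ)+1)^m := by positivity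
      linarith
    have hsub0 : (0:ℝ) ≤ ((k:ℝ)+2)^m - ((k:ℝ)+1)^m := by
      have := pow_le_pow_left₀ (by positivity : (0:ℝ) ≤ (k:ℝ)+1)
        (by linarith : (k:ℝ)+1 ≤ (k:ℝ)+2) m
      linarith
    have he0 : (0:ℝ) < Real.exp (-c1 * ((k:ℝ)+1)) := Real.exp_pos _
    calc (((k:ℝ)+2)^m - ((k:ℝ)+1)^m) * (c0 * Real.exp (-c1 * ((k:ℝ)+1)) * n)
        ≤ ((k:ℝ)+2)^m * (c0 * Real.exp (-c1 * ((k:ℝ)+1)) * n) := by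
          have h1 : (0:ℝ) ≤ c0 * Real.exp (-c1 * ((k:ℝ)+1)) * n := by positivity
          nlinarith
      _ ≤ ((4*m/c1)^m * Real.exp ((c1/2) * ((k:ℝ)+1))) * (c0 * Real.exp (-c1 * ((k:ℝ)+1)) * n) := by
          have h1 : (0:ℝ) ≤ c0 * Real.exp (-c1 * ((k:ℝ)+1)) * n := by positivity
          exact mul_le_mul_of_nonneg_right hpow h1
      _ = c0 * (n:ℝ) * ((4*m/c1)^m *
            (Real.exp (-c1 * ((k:ℝ)+1)) * Real.exp ((c1/2) * ((k:ℝ)+1)))) := by ring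
      _ = c0 * (n:ℝ) * ((4*m/c1)^m * s^(k+1)) := by rw [hskk]
      _ ≤ c0 * (n:ℝ) * ((4*m/c1)^m * s^k) := by
          have h1 : (0:ℝ) ≤ c0 * (n:ℝ) * (4*m/c1)^m := by positivity
          nlinarith
  have step1 : ∑ i, a i ^ (m+1) ≤ ∑ i, a i * (1 + ∑ k ∈ Finset.range N,
      (if ((k : ℝ) + 1) < a i then (((k : ℝ) + 2) ^ m - ((k : ℝ) + 1) ^ m) else 0)) := by
    refine Finset.sum_le_sum fun i _ => ?_
    rw [pow_succ']
    exact mul_le_mul_of_nonneg_left (st16_layer m (a i) (ha i) N (haN i)) (ha i)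
  have step2 : ∑ i, a i * (1 + ∑ k ∈ Finset.range N,
      (if ((k : ℝ) + 1) < a i then (((k : ℝ) + 2) ^ m - ((k : ℝ) + 1) ^ m) else 0))
      = (∑ i, a i) + ∑ k ∈ Finset.range N,
        ((((k:ℝ)+2)^m - ((k:ℝ)+1)^m) * ∑ i, (if ((k:ℝ)+1) < a i then a i else 0)) := by
    calc ∑ i, a i * (1 + ∑ k ∈ Finset.range N,
          (if ((k : ℝ) + 1) < a i then (((k : ℝ) + 2) ^ m - ((k : ℝ) + 1) ^ m) else 0))
        = ∑ i, (a i + ∑ k ∈ Finset.range N,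
            ((((k:ℝ)+2)^m - ((k:ℝ)+1)^m) * (if ((k:ℝ)+1) < a i then a i else 0))) := by
          refine Finset.sum_congr rfl fun i _ => ?_
          rw [mul_add, mul_one, Finset.mul_sum]
          congr 1
          refine Finset.sum_congr rfl fun k _ => ?_
          split <;> ring
      _ = (∑ i, a i) + ∑ i, ∑ k ∈ Finset.range N,
            ((((k:ℝ)+2)^m - ((k:ℝ)+1)^m) * (if ((k:ℝ)+1) < a i then a i else 0)) :=
          Finset.sum_add_distrib
      _ = (∑ i, a i) + ∑ k ∈ Finset.range N, ∑ i,
            ((((k:ℝ)+2)^m - ((k:ℝ)+1)^m) * (if ((k:ℝ)+1) < a i then a i else 0)) := by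
          rw [Finset.sum_comm]
      _ = (∑ i, a i) + ∑ k ∈ Finset.range N,
            ((((k:ℝ)+2)^m - ((k:ℝ)+1)^m) * ∑ i, (if ((k:ℝ)+1) < a i then a i else 0)) := by
          congr 1
          exact Finset.sum_congr rfl fun k _ => (Finset.mul_sum _ _ _).symm
  have step3 : ∑ k ∈ Finset.range N,
        ((((k:ℝ)+2)^m - ((k:ℝ)+1)^m) * ∑ i, (if ((k:ℝ)+1) < a i then a i else 0))
      ≤ ∑ k ∈ Finset.range N, c0 * (n:ℝ) * ((4 * m / c1) ^ m * s ^ k) := by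
    refine Finset.sum_le_sum fun k _ => ?_
    have hk0 : (0:ℝ) ≤ (k:ℝ) := Nat.cast_nonneg k
    have hsub0 : (0:ℝ) ≤ ((k:ℝ)+2)^m - ((k:ℝ)+1)^m := by
      have := pow_le_pow_left₀ (by positivity : (0:ℝ) ≤ (k:ℝ)+1)
        (by linarith : (k:ℝ)+1 ≤ (k:ℝ)+2) m
      linarith
    have ht := htail ((k:ℝ)+1) (by linarith)
    calc (((k:ℝ)+2)^m - ((k:ℝ)+1)^m) * ∑ i, (if ((k:ℝ)+1) < a i then a i else 0)
        ≤ (((k:ℝ)+2)^m - ((k:ℝ)+1)^m) * (c0 * Real.exp (-c1 * ((k:ℝ)+1)) * n) :=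
          mul_le_mul_of_nonneg_left ht hsub0
      _ ≤ c0 * (n:ℝ) * ((4 * m / c1) ^ m * s ^ k) := hcoef k
  have hgeom : ∑ k ∈ Finset.range N, s ^ k ≤ (1 - s)⁻¹ := by
    have h := Summable.sum_le_tsum (Finset.range N) (fun k _ => le_of_lt (pow_pos hs0 k))
      (summable_geometric_of_lt_one hs0.le hs1)
    rwa [tsum_geometric_of_lt_one hs0.le hs1] at h
  have step4 : ∑ k ∈ Finset.range N, c0 * (n:ℝ) * ((4 * m / c1) ^ m * s ^ k)
      ≤ c0 * ((4 * m / c1) ^ m * (1 - Real.exp (-(c1 / 2)))⁻¹) * n := by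
    rw [← Finset.mul_sum, ← Finset.mul_sum]
    have h1 : (0:ℝ) ≤ c0 * (n:ℝ) * (4 * m / c1) ^ m := by positivity
    calc c0 * (n:ℝ) * ((4 * m / c1) ^ m * ∑ k ∈ Finset.range N, s ^ k)
        ≤ c0 * (n:ℝ) * ((4 * m / c1) ^ m * (1-s)⁻¹) := by
          rw [← mul_assoc, ← mul_assoc]
          exact mul_le_mul_of_nonneg_left hgeom h1
      _ = c0 * ((4 * m / c1) ^ m * (1 - Real.exp (-(c1 / 2)))⁻¹) * n := by
          rw [hs_def]; ring
  calc ∑ i, a i ^ (m+1)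
      ≤ (∑ i, a i) + ∑ k ∈ Finset.range N,
          ((((k:ℝ)+2)^m - ((k:ℝ)+1)^m) * ∑ i, (if ((k:ℝ)+1) < a i then a i else 0)) := by
        rw [← step2]; exact step1
    _ ≤ B * n + c0 * ((4 * m / c1) ^ m * (1 - Real.exp (-(c1 / 2)))⁻¹) * n := by
        have := le_trans step3 step4
        linarith
    _ = (B + c0 * ((4 * m / c1) ^ m * (1 - Real.exp (-(c1 / 2)))⁻¹)) * n := by ring

lemma st16_cx2 (c x : ℝ) (hc : 0 ≤ c) (hx : 0 ≤ x) : c * x ^ 2 ≤ x ^ 3 + c ^ 3 := by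
  rcases le_total x c with h | h
  · have h1 : x ^ 2 ≤ c ^ 2 := by nlinarith
    nlinarith [mul_le_mul_of_nonneg_left h1 hc, pow_nonneg hx 3]
  · nlinarith [mul_le_mul_of_nonneg_right h (sq_nonneg x), pow_nonneg hc 3]

/-- the weighted-tails lemma. -/
theorem statement16 (c0 c1 : ℝ) (hc0 : 0 < c0) (hc1 : 0 < c1) :
    ∃ c2 : ℝ, 0 < c2 ∧
      ∀ n : ℕ, 0 < n →
        ∀ w : Fin n → ℝ, (∀ i, 0 < w i) →
          (∀ t : ℝ, 1 ≤ t →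
            (1 / (n : ℝ)) * ∑ i, (if t < w i then w i else 0) ≤
              c0 * Real.exp (-c1 * t)) →
          ∀ ℓ : ℕ, ∀ P : Fin ℓ → Finset (Fin n),
            (∀ j k : Fin ℓ, j ≠ k → Disjoint (P j) (P k)) →
            (∀ i : Fin n, ∃ j, i ∈ P j) →
            (∀ t : ℝ, 1 ≤ t →
              (1 / (n : ℝ)) *
                  ∑ j, (if t < ((P j).card : ℝ) then ((P j).card : ℝ) else 0) ≤
                c0 * Real.exp (-c1 * t)) →
            (1 / (n : ℝ)) * ∑ j, (∑ i ∈ P j, w i) ^ 2 ≤ c2 := by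
  classical
  set s : ℝ := Real.exp (-(c1 / 2)) with hs_def
  have hs0 : 0 < s := Real.exp_pos _
  have hs1 : s < 1 := Real.exp_lt_one_iff.mpr (by linarith)
  have hinv0 : 0 < (1 - s)⁻¹ := inv_pos.mpr (by linarith)
  set B2 : ℝ := (1 + c0) + c0 * ((4 * ((2:ℕ):ℝ) / c1) ^ 2 * (1 - s)⁻¹) with hB2_def
  set B3 : ℝ := 1 + c0 * ((4 * ((3:ℕ):ℝ) / c1) ^ 3 * (1 - s)⁻¹) with hB3_def
  have hB2pos : 0 < B2 := by
    have h1 : 0 < (4 * ((2:ℕ):ℝ) / c1) ^ 2 * (1 - s)⁻¹ := by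
      apply mul_pos _ hinv0; positivity
    have h2 := mul_pos hc0 h1
    rw [hB2_def]
    linarith
  have hB3pos : 0 < B3 := by
    have h1 : 0 < (4 * ((3:ℕ):ℝ) / c1) ^ 3 * (1 - s)⁻¹ := by
      apply mul_pos _ hinv0; positivity
    have h2 := mul_pos hc0 h1
    rw [hB3_def]
    linarith
  refine ⟨B2 + B3, by linarith, ?_⟩
  intro n hn w hw hwt ℓ P hdisj _hcover hPt
  have hn' : (0:ℝ) < n := by exact_mod_cast hn
  -- upgrade the tail bounds
  have hwt' : ∀ t : ℝ, 1 ≤ t →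
      ∑ i, (if t < w i then w i else 0) ≤ c0 * Real.exp (-c1 * t) * n := by
    intro t ht
    have h2 := mul_le_mul_of_nonneg_left (hwt t ht) hn'.le
    calc ∑ i, (if t < w i then w i else 0)
        = (n:ℝ) * ((1 / (n:ℝ)) * ∑ i, (if t < w i then w i else 0)) := by
          field_simp
      _ ≤ (n:ℝ) * (c0 * Real.exp (-c1 * t)) := h2
      _ = c0 * Real.exp (-c1 * t) * n := by ring
  have hPt' : ∀ t : ℝ, 1 ≤ t →
      ∑ j, (if t < ((P j).card : ℝ) then ((P j).card : ℝ) else 0)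
        ≤ c0 * Real.exp (-c1 * t) * n := by
    intro t ht
    have h2 := mul_le_mul_of_nonneg_left (hPt t ht) hn'.le
    calc ∑ j, (if t < ((P j).card : ℝ) then ((P j).card : ℝ) else 0)
        = (n:ℝ) * ((1 / (n:ℝ)) *
            ∑ j, (if t < ((P j).card : ℝ) then ((P j).card : ℝ) else 0)) := by
          rw [← mul_assoc, mul_one_div_cancel hn'.ne', one_mul]
      _ ≤ (n:ℝ) * (c0 * Real.exp (-c1 * t)) := h2
      _ = c0 * Real.exp (-c1 * t) * n := by ring
  -- base bounds
  have hWbase : ∑ i, w i ≤ (1 + c0) * n := by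
    have h1 : ∑ i, w i ≤ ∑ i, ((if (1:ℝ) < w i then w i else 0) + 1) := by
      refine Finset.sum_le_sum fun i _ => ?_
      by_cases h : (1:ℝ) < w i
      · simp [h]
      · simp only [if_neg h]
        linarith [not_lt.mp h]
    have h2 : ∑ i, ((if (1:ℝ) < w i then w i else 0) + 1)
        = (∑ i, (if (1:ℝ) < w i then w i else 0)) + n := by
      rw [Finset.sum_add_distrib, Finset.sum_const, Finset.card_univ, Fintype.card_fin,
        nsmul_eq_mul, mul_one]
    have h3 := hwt' 1 le_rfl
    have h4 : Real.exp (-c1 * 1) ≤ 1 := by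
      rw [Real.exp_le_one_iff]
      linarith
    have h5 : c0 * Real.exp (-c1 * 1) * n ≤ c0 * n := by
      have h6 := mul_le_mul_of_nonneg_left h4 hc0.le
      have h6' : c0 * Real.exp (-c1 * 1) ≤ c0 := by linarith
      exact mul_le_mul_of_nonneg_right h6' hn'.le
    calc ∑ i, w i ≤ (∑ i, (if (1:ℝ) < w i then w i else 0)) + n := by rw [← h2]; exact h1
      _ ≤ c0 * n + n := by linarith
      _ = (1 + c0) * n := by ring
  have hPbase : ∑ j, ((P j).card : ℝ) ≤ 1 * n := by
    have h1 : ∑ j, (P j).card ≤ n := by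
      rw [← Finset.card_biUnion (fun x _ y _ hxy => hdisj x y hxy)]
      calc ((Finset.univ : Finset (Fin ℓ)).biUnion P).card
          ≤ Fintype.card (Fin n) := Finset.card_le_univ _
        _ = n := Fintype.card_fin n
    rw [one_mul]
    exact_mod_cast h1
  -- moment bounds
  have hW3 := st16_key c0 c1 (1 + c0) hc0 hc1 2 (by norm_num) n w
    (fun i => (hw i).le) hWbase hwt'
  have hP4 := st16_key c0 c1 1 hc0 hc1 3 (by norm_num) n (fun j => ((P j).card : ℝ))
    (fun j => Nat.cast_nonneg _) hPbase hPt'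
  -- Cauchy–Schwarz and pointwise cube bound
  have hptwise : ∀ j, ((P j).card : ℝ) * ∑ i ∈ P j, w i ^ 2
      ≤ (∑ i ∈ P j, w i ^ (2+1)) + ((P j).card : ℝ) ^ (3+1) := by
    intro j
    rw [Finset.mul_sum]
    have h2 : ∑ i ∈ P j, ((P j).card : ℝ) * w i ^ 2
        ≤ ∑ i ∈ P j, (w i ^ (2+1) + ((P j).card : ℝ) ^ 3) := by
      refine Finset.sum_le_sum fun i _ => ?_
      have hcn : (0:ℝ) ≤ ((P j).card : ℝ) := Nat.cast_nonneg _
      have hwi := (hw i).le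
      have h7 : w i ^ (2+1) = w i ^ 3 := by norm_num
      linarith [st16_cx2 ((P j).card : ℝ) (w i) hcn hwi, h7.le, h7.ge]
    rw [Finset.sum_add_distrib, Finset.sum_const, nsmul_eq_mul] at h2
    have h3 : ((P j).card : ℝ) * ((P j).card : ℝ) ^ 3 = ((P j).card : ℝ) ^ (3+1) := by ring
    linarith [h2, h3.le]
  have hCS : ∑ j, (∑ i ∈ P j, w i) ^ 2 ≤ ∑ j, (((P j).card : ℝ) * ∑ i ∈ P j, w i ^ 2) :=
    Finset.sum_le_sum fun j _ => sq_sum_le_card_mul_sum_sq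
  have hsplit : ∑ j, (((P j).card : ℝ) * ∑ i ∈ P j, w i ^ 2)
      ≤ (∑ j, ∑ i ∈ P j, w i ^ (2+1)) + ∑ j, ((P j).card : ℝ) ^ (3+1) := by
    rw [← Finset.sum_add_distrib]
    exact Finset.sum_le_sum fun j _ => hptwise j
  have hdisj' : ((Finset.univ : Finset (Fin ℓ)) : Set (Fin ℓ)).PairwiseDisjoint P :=
    fun x _ y _ hxy => hdisj x y hxy
  have hcube : ∑ j, ∑ i ∈ P j, w i ^ (2+1) ≤ ∑ i, w i ^ (2+1) := by
    rw [← Finset.sum_biUnion hdisj']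
    exact Finset.sum_le_sum_of_subset_of_nonneg (Finset.subset_univ _)
      (fun i _ _ => pow_nonneg (hw i).le _)
  have htotal : ∑ j, (∑ i ∈ P j, w i) ^ 2 ≤ (B2 + B3) * n := by
    calc ∑ j, (∑ i ∈ P j, w i) ^ 2
        ≤ (∑ i, w i ^ (2+1)) + ∑ j, ((P j).card : ℝ) ^ (3+1) := by
          linarith [hCS, hsplit, hcube]
      _ ≤ B2 * n + B3 * n := by
          rw [hB2_def, hB3_def]
          exact add_le_add hW3 hP4
      _ = (B2 + B3) * n := by ring
  calc (1 / (n:ℝ)) * ∑ j, (∑ i ∈ P j, w i) ^ 2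
      ≤ (1 / (n:ℝ)) * ((B2 + B3) * n) := by
        apply mul_le_mul_of_nonneg_left htotal
        positivity
    _ = B2 + B3 := by field_simp
end

section
/- For d > e, the function α ↦ 1 − exp(−d(1−α)) has a unique fixed point β in (0,1); this β lies in the interval [α_*(d), α^*(d)], it satisfies 1 − β = exp(−d(1−β)), and Φ_d attains its unique local minimum on [α_*(d), α^*(d)] at β. -/
open Filter Topology MeasureTheory ProbabilityTheory

noncomputable section

def psiFn (d α : ℝ) : ℝ := phiFn d α - α

def gFn (d α : ℝ) : ℝ :=
  d ^ 2 * Real.exp (-d * (1 - α)) * Real.exp (-d * Real.exp (-d * (1 - α)))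

lemma hasDerivAt_inner (d α : ℝ) : HasDerivAt (fun x : ℝ => -d * (1 - x)) d α := by
  simpa using ((hasDerivAt_id α).const_sub (1 : ℝ)).const_mul (-d)

lemma hasDerivAt_E (d α : ℝ) :
    HasDerivAt (fun x : ℝ => Real.exp (-d * (1 - x))) (Real.exp (-d * (1 - α)) * d) α :=
  (hasDerivAt_inner d α).exp

lemma hasDerivAt_F (d α : ℝ) :
    HasDerivAt (fun x : ℝ => Real.exp (-d * Real.exp (-d * (1 - x))))
      (Real.exp (-d * Real.exp (-d * (1 - α))) * (-d * (Real.exp (-d * (1 - α)) * d))) α :=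
  ((hasDerivAt_E d α).const_mul (-d)).exp

lemma hasDerivAt_psi (d α : ℝ) : HasDerivAt (psiFn d) (gFn d α - 1) α := by
  have h := ((hasDerivAt_F d α).const_sub (1 : ℝ)).sub (hasDerivAt_id α)
  change HasDerivAt (fun x : ℝ => 1 - Real.exp (-d * Real.exp (-d * (1 - x))) - x) _ α at h
  have hfun : (fun x : ℝ => 1 - Real.exp (-d * Real.exp (-d * (1 - x))) - x) = psiFn d := by
    funext x; simp [psiFn, phiFn]
  rw [hfun] at h
  convert h using 1
  unfold gFn; ring

lemma hasDerivAt_g (d α : ℝ) :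
    HasDerivAt (gFn d)
      (d ^ 3 * Real.exp (-d * (1 - α)) * Real.exp (-d * Real.exp (-d * (1 - α))) *
        (1 - d * Real.exp (-d * (1 - α)))) α := by
  have h := ((hasDerivAt_E d α).const_mul (d ^ 2)).mul (hasDerivAt_F d α)
  have hfun : (fun x : ℝ => d ^ 2 * Real.exp (-d * (1 - x)) *
      Real.exp (-d * Real.exp (-d * (1 - x)))) = gFn d := rfl
  change HasDerivAt (fun x : ℝ => d ^ 2 * Real.exp (-d * (1 - x)) *
      Real.exp (-d * Real.exp (-d * (1 - x)))) _ α at h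
  rw [hfun] at h
  convert h using 1
  ring

lemma hasDerivAt_Phi (d α : ℝ) :
    HasDerivAt (PhiFn d) (d ^ 2 * Real.exp (-d * (1 - α)) * psiFn d α) α := by
  have hlin : HasDerivAt (fun x : ℝ => 1 + d * (1 - x)) (-d) α := by
    simpa using (((hasDerivAt_id α).const_sub (1 : ℝ)).const_mul d).const_add 1
  have h := ((hasDerivAt_F d α).add (hlin.mul (hasDerivAt_E d α))).sub_const 1
  have hfun : (fun x : ℝ => Real.exp (-d * Real.exp (-d * (1 - x))) +
      (1 + d * (1 - x)) * Real.exp (-d * (1 - x)) - 1) = PhiFn d := rfl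
  change HasDerivAt (fun x : ℝ => Real.exp (-d * Real.exp (-d * (1 - x))) +
      (1 + d * (1 - x)) * Real.exp (-d * (1 - x)) - 1) _ α at h
  rw [hfun] at h
  convert h using 1
  simp only [psiFn, phiFn]; ring

lemma continuous_phi (d : ℝ) : Continuous (phiFn d) := by
  unfold phiFn; continuity

lemma continuous_psi (d : ℝ) : Continuous (psiFn d) := by
  unfold psiFn phiFn; continuity

lemma continuous_Phi (d : ℝ) : Continuous (PhiFn d) := by
  unfold PhiFn; continuity

lemma strictConvex_psi (d : ℝ) (hd : 0 < d) :
    StrictConvexOn ℝ (Set.Iic (1 - Real.log d / d)) (psiFn d) := by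
  apply strictConvexOn_of_deriv2_pos (convex_Iic _) (continuous_psi d).continuousOn
  intro x hx
  rw [interior_Iic] at hx
  have hderiv1 : deriv (psiFn d) = fun y => gFn d y - 1 :=
    funext fun y => (hasDerivAt_psi d y).deriv
  have h2 : deriv^[2] (psiFn d) x = deriv (deriv (psiFn d)) x := rfl
  rw [h2, hderiv1, ((hasDerivAt_g d x).sub_const 1).deriv]
  have hlog : Real.log d < d * (1 - x) := by
    have h1 : Real.log d / d < 1 - x := by linarith [hx.out]
    calc Real.log d = Real.log d / d * d := by field_simp
    _ < (1 - x) * d := mul_lt_mul_of_pos_right h1 hd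
    _ = d * (1 - x) := by ring
  have hE1 : d * Real.exp (-d * (1 - x)) < 1 := by
    have h2 : Real.exp (-d * (1 - x)) < Real.exp (-Real.log d) :=
      Real.exp_lt_exp.mpr (by linarith)
    rw [Real.exp_neg, Real.exp_log hd] at h2
    calc d * Real.exp (-d * (1 - x)) < d * d⁻¹ := mul_lt_mul_of_pos_left h2 hd
    _ = 1 := by field_simp
  have h3 : (0:ℝ) < d ^ 3 := by positivity
  nlinarith [mul_pos (mul_pos h3 (Real.exp_pos (-d * (1 - x))))
    (Real.exp_pos (-d * Real.exp (-d * (1 - x))))]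

lemma strictConcave_psi (d : ℝ) (hd : 0 < d) :
    StrictConcaveOn ℝ (Set.Ici (1 - Real.log d / d)) (psiFn d) := by
  apply strictConcaveOn_of_deriv2_neg (convex_Ici _) (continuous_psi d).continuousOn
  intro x hx
  rw [interior_Ici] at hx
  have hderiv1 : deriv (psiFn d) = fun y => gFn d y - 1 :=
    funext fun y => (hasDerivAt_psi d y).deriv
  have h2 : deriv^[2] (psiFn d) x = deriv (deriv (psiFn d)) x := rfl
  rw [h2, hderiv1, ((hasDerivAt_g d x).sub_const 1).deriv]
  have hlog : d * (1 - x) < Real.log d := by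
    have h1 : 1 - x < Real.log d / d := by linarith [hx.out]
    calc d * (1 - x) = (1 - x) * d := by ring
    _ < Real.log d / d * d := mul_lt_mul_of_pos_right h1 hd
    _ = Real.log d := by field_simp
  have hE1 : 1 < d * Real.exp (-d * (1 - x)) := by
    have h2 : Real.exp (-Real.log d) < Real.exp (-d * (1 - x)) :=
      Real.exp_lt_exp.mpr (by linarith)
    rw [Real.exp_neg, Real.exp_log hd] at h2
    calc (1:ℝ) = d * d⁻¹ := by field_simp
    _ < d * Real.exp (-d * (1 - x)) := mul_lt_mul_of_pos_left h2 hd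
  have h3 : (0:ℝ) < d ^ 3 := by positivity
  nlinarith [mul_pos (mul_pos h3 (Real.exp_pos (-d * (1 - x))))
    (Real.exp_pos (-d * Real.exp (-d * (1 - x))))]

set_option maxHeartbeats 2000000 in
/-- for `d > e`, the map `α ↦ 1 − exp(−d(1−α))` has a unique fixed point
`β ∈ (0,1)`; `β ∈ [α_*, α^*]`, `1 − β = exp(−d(1−β))`, and `β` is the unique local
minimiser of `Φ_d` on `[α_*, α^*]`. -/
theorem statement17 (d : ℝ) (hd : Real.exp 1 < d) :
    ∃ β : ℝ, β ∈ Set.Ioo (0:ℝ) 1 ∧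
      1 - Real.exp (-d * (1 - β)) = β ∧
      (∀ β' ∈ Set.Ioo (0:ℝ) 1, 1 - Real.exp (-d * (1 - β')) = β' → β' = β) ∧
      β ∈ Set.Icc (alphaMin d) (alphaMax d) ∧
      1 - β = Real.exp (-d * (1 - β)) ∧
      (∀ α ∈ Set.Icc (alphaMin d) (alphaMax d),
        (IsLocalMinOn (PhiFn d) (Set.Icc (alphaMin d) (alphaMax d)) α ↔ α = β)) := by
  have hd0 : (0:ℝ) < d := (Real.exp_pos 1).trans hd
  set k : ℝ → ℝ := fun x => 1 - Real.exp (-d * (1 - x)) - x with hk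
  have hkcont : Continuous k := by rw [hk]; fun_prop
  have hk0 : 0 < k 0 := by
    have h1 : Real.exp (-d * (1 - 0)) < 1 := Real.exp_lt_one_iff.mpr (by linarith)
    simp only [hk]; linarith
  have hk1 : k 1 < 0 := by
    simp [hk]
  obtain ⟨β, hβmem, hβk⟩ := intermediate_value_Ioo' (zero_le_one) hkcont.continuousOn
    (Set.mem_Ioo.mpr ⟨hk1, hk0⟩)
  have hβeq : 1 - Real.exp (-d * (1 - β)) = β := by
    have := hβk; simp only [hk] at this; linarith
  have hkanti : StrictAnti k := by
    intro x y hxy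
    have hexp : Real.exp (-d * (1 - x)) < Real.exp (-d * (1 - y)) :=
      Real.exp_lt_exp.mpr (by nlinarith)
    simp only [hk]; linarith
  have huniq : ∀ β' ∈ Set.Ioo (0:ℝ) 1, 1 - Real.exp (-d * (1 - β')) = β' → β' = β := by
    intro β' _ hβ'
    apply hkanti.injective
    have h1 : k β' = 0 := by simp only [hk]; linarith
    rw [h1, hβk]
  have hβ2 : 1 - β = Real.exp (-d * (1 - β)) := by linarith
  have hEβ : Real.exp (-d * (1 - β)) = 1 - β := hβ2.symm
  have hβfix : phiFn d β = β := by rw [phiFn, hEβ]; exact hβeq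
  set S := {α : ℝ | α ∈ Set.Icc (0:ℝ) 1 ∧ phiFn d α = α} with hS
  have hβS : β ∈ S := ⟨⟨hβmem.1.le, hβmem.2.le⟩, hβfix⟩
  have hSne : S.Nonempty := ⟨β, hβS⟩
  have hSbb : BddBelow S := ⟨0, fun x hx => hx.1.1⟩
  have hSba : BddAbove S := ⟨1, fun x hx => hx.1.2⟩
  have hScl : IsClosed S := by
    have h1 : IsClosed {x : ℝ | phiFn d x = x} := isClosed_eq (continuous_phi d) continuous_id
    have h2 : S = Set.Icc (0:ℝ) 1 ∩ {x : ℝ | phiFn d x = x} := Set.ext fun x => Iff.rfl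
    rw [h2]; exact isClosed_Icc.inter h1
  have hAmem : alphaMin d ∈ S := hScl.csInf_mem hSne hSbb
  have hBmem : alphaMax d ∈ S := hScl.csSup_mem hSne hSba
  have hAβ : alphaMin d ≤ β := csInf_le hSbb hβS
  have hβB : β ≤ alphaMax d := le_csSup hSba hβS
  have hψβ : psiFn d β = 0 := by simp [psiFn, hβfix]
  have hψA : psiFn d (alphaMin d) = 0 := by simp [psiFn, hAmem.2]
  have hψB : psiFn d (alphaMax d) = 0 := by simp [psiFn, hBmem.2]
  -- derivative of psi at β is positive
  have htβ : 1 < d * (1 - β) := by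
    by_contra hcon
    push_neg at hcon
    have h1 : Real.exp (-1) ≤ Real.exp (-d * (1 - β)) :=
      Real.exp_le_exp.mpr (by linarith)
    rw [hEβ] at h1
    have h2 : d * Real.exp (-1) ≤ d * (1 - β) :=
      mul_le_mul_of_nonneg_left h1 hd0.le
    have h3 : 1 < d * Real.exp (-1) := by
      rw [Real.exp_neg, ← div_eq_mul_inv]
      exact (one_lt_div (Real.exp_pos 1)).mpr hd
    linarith
  have hψ'β : 0 < gFn d β - 1 := by
    have hg : gFn d β = (d * (1 - β)) ^ 2 := by
      rw [gFn, hEβ, hEβ]; ring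
    rw [hg]; nlinarith
  -- find negative point left of β, positive point right of β
  have hslope := hasDerivAt_iff_tendsto_slope.mp (hasDerivAt_psi d β)
  have hev : ∀ᶠ x in 𝓝[≠] β, 0 < slope (psiFn d) β x :=
    hslope.eventually (eventually_gt_nhds hψ'β)
  have hleft : ∃ w, w ∈ Set.Ioo 0 β ∧ psiFn d w < 0 := by
    have hle : 𝓝[<] β ≤ 𝓝[≠] β := nhdsWithin_mono β fun x hx => ne_of_lt hx
    have hmem : Set.Ioo (0:ℝ) β ∈ 𝓝[<] β := Ioo_mem_nhdsLT_of_mem ⟨hβmem.1, le_refl β⟩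
    obtain ⟨w, hw1, hw2⟩ :=
      ((hev.filter_mono hle).and (eventually_of_mem hmem fun x hx => hx)).exists
    refine ⟨w, hw2, ?_⟩
    rw [slope_def_field, hψβ, sub_zero] at hw1
    by_contra hc
    push_neg at hc
    have : psiFn d w / (w - β) ≤ 0 :=
      div_nonpos_of_nonneg_of_nonpos hc (by linarith [hw2.2])
    linarith
  have hright : ∃ w, w ∈ Set.Ioo β 1 ∧ 0 < psiFn d w := by
    have hle : 𝓝[>] β ≤ 𝓝[≠] β := nhdsWithin_mono β fun x hx => ne_of_gt hx
    have hmem : Set.Ioo β (1:ℝ) ∈ 𝓝[>] β := Ioo_mem_nhdsGT_of_mem ⟨le_refl β, hβmem.2⟩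
    obtain ⟨w, hw1, hw2⟩ :=
      ((hev.filter_mono hle).and (eventually_of_mem hmem fun x hx => hx)).exists
    refine ⟨w, hw2, ?_⟩
    rw [slope_def_field, hψβ, sub_zero] at hw1
    by_contra hc
    push_neg at hc
    have : psiFn d w / (w - β) ≤ 0 :=
      div_nonpos_of_nonpos_of_nonneg hc (by linarith [hw2.1])
    linarith
  have hψ0 : 0 < psiFn d 0 := by
    have h1 : Real.exp (-d * Real.exp (-d * (1 - 0))) < 1 :=
      Real.exp_lt_one_iff.mpr (by nlinarith [Real.exp_pos (-d * (1 - (0:ℝ)))])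
    simp only [psiFn, phiFn]; linarith
  have hψ1 : psiFn d 1 < 0 := by
    simp only [psiFn, phiFn, sub_self, mul_zero, neg_zero, Real.exp_zero, mul_one]
    have := Real.exp_pos (-d)
    linarith
  obtain ⟨w, hwIoo, hwneg⟩ := hleft
  obtain ⟨z, hz, hz0⟩ := intermediate_value_Ioo' hwIoo.1.le (continuous_psi d).continuousOn
    (Set.mem_Ioo.mpr ⟨hwneg, hψ0⟩)
  have hzS : z ∈ S := by
    refine ⟨⟨hz.1.le, ?_⟩, ?_⟩
    · nlinarith [hz.2, hwIoo.2, hβmem.2]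
    · simp only [psiFn] at hz0; linarith
  have hAltβ : alphaMin d < β := lt_of_le_of_lt (csInf_le hSbb hzS) (hz.2.trans hwIoo.2)
  obtain ⟨w', hw'Ioo, hw'pos⟩ := hright
  obtain ⟨z', hz', hz'0⟩ := intermediate_value_Ioo' hw'Ioo.2.le (continuous_psi d).continuousOn
    (Set.mem_Ioo.mpr ⟨hψ1, hw'pos⟩)
  have hz'S : z' ∈ S := by
    refine ⟨⟨?_, hz'.2.le⟩, ?_⟩
    · have := hw'Ioo.1; have := hz'.1; have := hβmem.1; linarith
    · simp only [psiFn] at hz'0; linarith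
  have hβltB : β < alphaMax d :=
    lt_of_lt_of_le (hw'Ioo.1.trans hz'.1) (le_csSup hSba hz'S)
  -- sign of psi on (alphaMin, β) and (β, alphaMax)
  have claim1 : ∀ γ ∈ Set.Ioo (alphaMin d) β, psiFn d γ < 0 := by
    intro γ hγ
    obtain ⟨hγ1, hγ2⟩ := hγ
    rcases le_or_gt β (1 - Real.log d / d) with hba | hba
    · have h := (strictConvex_psi d hd0).secant_strict_mono
        (a := alphaMin d) (x := γ) (y := β)
        (Set.mem_Iic.mpr (by linarith)) (Set.mem_Iic.mpr (by linarith))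
        (Set.mem_Iic.mpr hba) (ne_of_gt hγ1) (ne_of_gt (by linarith)) hγ2
      rw [hψA, hψβ] at h
      simp only [sub_zero, zero_sub, zero_div] at h
      have h0 : 0 < γ - alphaMin d := by linarith
      by_contra hc; push_neg at hc
      have := div_nonneg hc h0.le
      linarith
    · rcases le_or_gt (1 - Real.log d / d) γ with hag | hag
      · have h := (strictConcave_psi d hd0).lt_slope_of_hasDerivAt (x := γ) (y := β)
          (Set.mem_Ici.mpr hag) (Set.mem_Ici.mpr hba.le) hγ2 (hasDerivAt_psi d β)
        rw [slope_def_field, hψβ] at h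
        by_contra hc; push_neg at hc
        have h0 : (0 - psiFn d γ) / (β - γ) ≤ 0 :=
          div_nonpos_of_nonpos_of_nonneg (by linarith) (by linarith)
        linarith
      · have hψa : psiFn d (1 - Real.log d / d) < 0 := by
          have h := (strictConcave_psi d hd0).lt_slope_of_hasDerivAt
            (x := 1 - Real.log d / d) (y := β)
            (Set.mem_Ici.mpr le_rfl) (Set.mem_Ici.mpr hba.le) hba (hasDerivAt_psi d β)
          rw [slope_def_field, hψβ] at h
          by_contra hc; push_neg at hc
          have h0 : (0 - psiFn d (1 - Real.log d / d)) / (β - (1 - Real.log d / d)) ≤ 0 :=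
            div_nonpos_of_nonpos_of_nonneg (by linarith) (by linarith)
          linarith
        have h := (strictConvex_psi d hd0).secant_strict_mono
          (a := alphaMin d) (x := γ) (y := 1 - Real.log d / d)
          (Set.mem_Iic.mpr (by linarith)) (Set.mem_Iic.mpr hag.le)
          (Set.mem_Iic.mpr le_rfl) (ne_of_gt hγ1) (ne_of_gt (by linarith)) hag
        rw [hψA] at h
        simp only [sub_zero] at h
        have h0 : 0 < γ - alphaMin d := by linarith
        have h1 : psiFn d (1 - Real.log d / d) / ((1 - Real.log d / d) - alphaMin d) < 0 :=
          div_neg_of_neg_of_pos hψa (by linarith)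
        by_contra hc; push_neg at hc
        have := div_nonneg hc h0.le
        linarith
  have claim2 : ∀ γ ∈ Set.Ioo β (alphaMax d), 0 < psiFn d γ := by
    intro γ hγ
    obtain ⟨hγ1, hγ2⟩ := hγ
    rcases le_or_gt (1 - Real.log d / d) β with hab | hab
    · have h := (strictConcave_psi d hd0).secant_strict_mono
        (a := β) (x := γ) (y := alphaMax d)
        (Set.mem_Ici.mpr hab) (Set.mem_Ici.mpr (by linarith))
        (Set.mem_Ici.mpr (by linarith)) (ne_of_gt hγ1) (ne_of_gt (by linarith)) hγ2
      rw [hψβ, hψB] at h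
      simp only [sub_zero, zero_sub, zero_div] at h
      by_contra hc; push_neg at hc
      have h0 : psiFn d γ / (γ - β) ≤ 0 :=
        div_nonpos_of_nonpos_of_nonneg hc (by linarith)
      linarith
    · rcases le_or_gt γ (1 - Real.log d / d) with hga | hga
      · have h := (strictConvex_psi d hd0).lt_slope_of_hasDerivAt (x := β) (y := γ)
          (Set.mem_Iic.mpr hab.le) (Set.mem_Iic.mpr hga) hγ1 (hasDerivAt_psi d β)
        rw [slope_def_field, hψβ, sub_zero] at h
        by_contra hc; push_neg at hc
        have h0 : psiFn d γ / (γ - β) ≤ 0 :=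
          div_nonpos_of_nonpos_of_nonneg hc (by linarith)
        linarith
      · have hψa : 0 < psiFn d (1 - Real.log d / d) := by
          have h := (strictConvex_psi d hd0).lt_slope_of_hasDerivAt
            (x := β) (y := 1 - Real.log d / d)
            (Set.mem_Iic.mpr hab.le) (Set.mem_Iic.mpr le_rfl) hab (hasDerivAt_psi d β)
          rw [slope_def_field, hψβ, sub_zero] at h
          by_contra hc; push_neg at hc
          have h0 : psiFn d (1 - Real.log d / d) / ((1 - Real.log d / d) - β) ≤ 0 :=
            div_nonpos_of_nonpos_of_nonneg hc (by linarith)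
          linarith
        have h := (strictConcave_psi d hd0).secant_strict_mono
          (a := alphaMax d) (x := 1 - Real.log d / d) (y := γ)
          (Set.mem_Ici.mpr (by linarith)) (Set.mem_Ici.mpr le_rfl)
          (Set.mem_Ici.mpr hga.le) (ne_of_lt (by linarith)) (ne_of_lt hγ2) hga
        rw [hψB] at h
        simp only [sub_zero] at h
        have h1 : psiFn d (1 - Real.log d / d) / ((1 - Real.log d / d) - alphaMax d) < 0 :=
          div_neg_of_pos_of_neg hψa (by linarith)
        by_contra hc; push_neg at hc
        have h2 : 0 ≤ psiFn d γ / (γ - alphaMax d) :=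
          div_nonneg_of_nonpos hc (by linarith : γ - alphaMax d ≤ 0)
        linarith
  -- monotonicity of PhiFn
  have hanti : StrictAntiOn (PhiFn d) (Set.Icc (alphaMin d) β) := by
    apply strictAntiOn_of_deriv_neg (convex_Icc _ _) (continuous_Phi d).continuousOn
    intro x hx
    rw [interior_Icc] at hx
    rw [(hasDerivAt_Phi d x).deriv]
    exact mul_neg_of_pos_of_neg (mul_pos (by positivity) (Real.exp_pos _)) (claim1 x hx)
  have hmono : StrictMonoOn (PhiFn d) (Set.Icc β (alphaMax d)) := by
    apply strictMonoOn_of_deriv_pos (convex_Icc _ _) (continuous_Phi d).continuousOn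
    intro x hx
    rw [interior_Icc] at hx
    rw [(hasDerivAt_Phi d x).deriv]
    exact mul_pos (mul_pos (by positivity) (Real.exp_pos _)) (claim2 x hx)
  have hmin : ∀ x ∈ Set.Icc (alphaMin d) (alphaMax d), PhiFn d β ≤ PhiFn d x := by
    intro x hx
    rcases lt_trichotomy x β with h | h | h
    · exact (hanti ⟨hx.1, h.le⟩ ⟨hAβ, le_refl β⟩ h).le
    · rw [h]
    · exact (hmono ⟨le_refl β, hβB⟩ ⟨h.le, hx.2⟩ h).le
  refine ⟨β, hβmem, hβeq, huniq, ⟨hAβ, hβB⟩, hβ2, ?_⟩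
  intro α hα
  constructor
  · intro hls
    by_contra hne
    rcases lt_or_gt_of_ne hne with hlt | hgt
    · have hsub : Set.Ioo α β ⊆ Set.Icc (alphaMin d) (alphaMax d) :=
        fun x hx => ⟨hα.1.trans hx.1.le, hx.2.le.trans hβB⟩
      have hclos : α ∈ closure (Set.Ioo α β) := by
        rw [closure_Ioo (ne_of_lt hlt)]
        exact ⟨le_refl α, hlt.le⟩
      haveI := mem_closure_iff_nhdsWithin_neBot.mp hclos
      have hev2 : ∀ᶠ x in 𝓝[Set.Ioo α β] α, PhiFn d α ≤ PhiFn d x :=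
        hls.filter_mono (nhdsWithin_mono α hsub)
      obtain ⟨x, hx1, hx2⟩ := (hev2.and eventually_mem_nhdsWithin).exists
      have : PhiFn d x < PhiFn d α :=
        hanti ⟨hα.1, hlt.le⟩ ⟨hα.1.trans hx2.1.le, hx2.2.le⟩ hx2.1
      linarith
    · have hsub : Set.Ioo β α ⊆ Set.Icc (alphaMin d) (alphaMax d) :=
        fun x hx => ⟨hAβ.trans hx.1.le, hx.2.le.trans hα.2⟩
      have hclos : α ∈ closure (Set.Ioo β α) := by
        rw [closure_Ioo (ne_of_lt hgt)]
        exact ⟨hgt.le, le_refl α⟩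
      haveI := mem_closure_iff_nhdsWithin_neBot.mp hclos
      have hev2 : ∀ᶠ x in 𝓝[Set.Ioo β α] α, PhiFn d α ≤ PhiFn d x :=
        hls.filter_mono (nhdsWithin_mono α hsub)
      obtain ⟨x, hx1, hx2⟩ := (hev2.and eventually_mem_nhdsWithin).exists
      have : PhiFn d x < PhiFn d α :=
        hmono ⟨hx2.1.le, hx2.2.le.trans hα.2⟩ ⟨hgt.le, hα.2⟩ hx2.2
      linarith
  · intro h
    subst h
    exact (isMinOn_iff.mpr hmin).localize
end
end
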